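/- arXiv:1211.1245 — 6 statements merged into one kernel-verified Lean document; each statement's English description precedes it below -/
import Mathlib

section
/- Let B = (b_ij) be an m×m irreducible coupling matrix. Then: (i) the kernel of B is contained in the line ℝ𝟙 spanned by the vector 𝟙 = (1,…,1); (ii) Ker(B) = ℝ𝟙 if and only if B is degenerate. In particular, B is invertible if and only if ∑_{j=1}^m b_ij > 0 for some i ∈ {1,…,m}. -/
open Filter MeasureTheory

noncomputable section

/-- We model the flat torus `T^N = ℝ^N/ℤ^N` by working with `ℤ^N`-periodic
functions on `Euc N = ℝ^N` (with the Euclidean structure). -/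
abbrev Euc (N : ℕ) := EuclideanSpace ℝ (Fin N)

/-- The vector of `ℝ^N` with integer coordinates `k`. -/
def intVec {N : ℕ} (k : Fin N → ℤ) : Euc N := WithLp.toLp 2 (fun i => (k i : ℝ))

/-- A function on `ℝ^N` is `ℤ^N`-periodic, i.e. descends to the torus. -/
def ZPeriodic {N : ℕ} {α : Type*} (f : Euc N → α) : Prop :=
  ∀ (x : Euc N) (k : Fin N → ℤ), f (x + intVec k) = f x

/-- `b` is a coupling matrix: off-diagonal entries are nonpositive and
row sums are nonnegative. -/
def IsCouplingMat {m : ℕ} (b : Fin m → Fin m → ℝ) : Prop :=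
  (∀ i j, j ≠ i → b i j ≤ 0) ∧ (∀ i, 0 ≤ ∑ j, b i j)

/-- `b` is degenerate: all row sums vanish. -/
def IsDegenerateMat {m : ℕ} (b : Fin m → Fin m → ℝ) : Prop :=
  ∀ i, ∑ j, b i j = 0

/-- `b` is irreducible: for every nonempty proper subset `I` of the indices
there are `i ∈ I` and `j ∉ I` with `b i j ≠ 0`. -/
def IsIrreducibleMat {m : ℕ} (b : Fin m → Fin m → ℝ) : Prop :=
  ∀ I : Finset (Fin m), I.Nonempty → I ≠ Finset.univ → ∃ i ∈ I, ∃ j, j ∉ I ∧ b i j ≠ 0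

/-- `H` is a convex Hamiltonian on the torus: continuous, convex in the momentum,
`ℤ^N`-periodic in the space variable, and coercive (uniformly in `x`). -/
def IsConvexHamiltonian {N : ℕ} (H : Euc N → Euc N → ℝ) : Prop :=
  Continuous (fun q : Euc N × Euc N => H q.1 q.2) ∧
  (∀ x : Euc N, ConvexOn ℝ Set.univ (H x)) ∧
  (∀ (x : Euc N) (k : Fin N → ℤ) (p : Euc N), H (x + intVec k) p = H x p) ∧
  (∃ α β : ℝ → ℝ, Tendsto α atTop atTop ∧ Tendsto β atTop atTop ∧
    ∀ x p, α ‖p‖ ≤ H x p ∧ H x p ≤ β ‖p‖)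

/-- `B` is a continuous field of irreducible degenerate coupling matrices
on the torus. -/
def IsCouplingField {N m : ℕ} (B : Euc N → Fin m → Fin m → ℝ) : Prop :=
  (∀ i j, Continuous fun x => B x i j) ∧
  (∀ i j, ZPeriodic fun x => B x i j) ∧
  (∀ x, IsCouplingMat (B x) ∧ IsDegenerateMat (B x) ∧ IsIrreducibleMat (B x))

/-- `u` is a viscosity subsolution of the weakly coupled system
`H_i(x,Du_i) + (B(x)u(x))_i = a_i` on the torus. -/
def IsSubSol {N m : ℕ} (H : Fin m → Euc N → Euc N → ℝ) (B : Euc N → Fin m → Fin m → ℝ)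
    (a : Fin m → ℝ) (u : Fin m → Euc N → ℝ) : Prop :=
  ∀ (i : Fin m) (x : Euc N) (φ : Euc N → ℝ), ContDiff ℝ 1 φ →
    IsLocalMax (fun y => u i y - φ y) x →
    H i x (gradient φ x) + ∑ j, B x i j * u j x ≤ a i

/-- `u` is a viscosity supersolution of the weakly coupled system
`H_i(x,Du_i) + (B(x)u(x))_i = a_i` on the torus. -/
def IsSuperSol {N m : ℕ} (H : Fin m → Euc N → Euc N → ℝ) (B : Euc N → Fin m → Fin m → ℝ)
    (a : Fin m → ℝ) (u : Fin m → Euc N → ℝ) : Prop :=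
  ∀ (i : Fin m) (x : Euc N) (φ : Euc N → ℝ), ContDiff ℝ 1 φ →
    IsLocalMin (fun y => u i y - φ y) x →
    a i ≤ H i x (gradient φ x) + ∑ j, B x i j * u j x

/-- The `i`-th equation subsolution property, restricted to a subset `U` of `ℝ^N`. -/
def SubSolIdxOn {N m : ℕ} (H : Fin m → Euc N → Euc N → ℝ) (B : Euc N → Fin m → Fin m → ℝ)
    (i : Fin m) (U : Set (Euc N)) (u : Fin m → Euc N → ℝ) : Prop :=
  ∀ x ∈ U, ∀ φ : Euc N → ℝ, ContDiff ℝ 1 φ →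
    IsLocalMax (fun y => u i y - φ y) x →
    H i x (gradient φ x) + ∑ j, B x i j * u j x ≤ 0

/-- The `i`-th equation supersolution property, restricted to a subset `U` of `ℝ^N`. -/
def SuperSolIdxOn {N m : ℕ} (H : Fin m → Euc N → Euc N → ℝ) (B : Euc N → Fin m → Fin m → ℝ)
    (i : Fin m) (U : Set (Euc N)) (u : Fin m → Euc N → ℝ) : Prop :=
  ∀ x ∈ U, ∀ φ : Euc N → ℝ, ContDiff ℝ 1 φ →
    IsLocalMin (fun y => u i y - φ y) x →
    0 ≤ H i x (gradient φ x) + ∑ j, B x i j * u j x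

/-- A continuous `ℝ^m`-valued function on the torus (componentwise continuous
and `ℤ^N`-periodic). -/
def IsTorusFun {N m : ℕ} (u : Fin m → Euc N → ℝ) : Prop :=
  (∀ i, Continuous (u i)) ∧ (∀ i, ZPeriodic (u i))

/-- The system with constant right-hand side `a` admits a continuous viscosity
subsolution. -/
def HasSubSol {N m : ℕ} (H : Fin m → Euc N → Euc N → ℝ) (B : Euc N → Fin m → Fin m → ℝ)
    (a : ℝ) : Prop :=
  ∃ u : Fin m → Euc N → ℝ, IsTorusFun u ∧ IsSubSol H B (fun _ => a) u

/-- The set `H(0)` of critical subsolutions (the critical value being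
assumed to be `0`). -/
def Crit {N m : ℕ} (H : Fin m → Euc N → Euc N → ℝ) (B : Euc N → Fin m → Fin m → ℝ) :
    Set (Fin m → Euc N → ℝ) :=
  {u | IsTorusFun u ∧ IsSubSol H B (fun _ => 0) u}

/-- The Mañé matrix `Φ_{i,j}(y,x) = sup_{v ∈ H(0)} (v_i(x) - v_j(y))`. -/
def Mane {N m : ℕ} (H : Fin m → Euc N → Euc N → ℝ) (B : Euc N → Fin m → Fin m → ℝ)
    (i j : Fin m) (y x : Euc N) : ℝ :=
  sSup ((fun v : Fin m → Euc N → ℝ => v i x - v j y) '' Crit H B)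

/-- The Aubry set: the set of points `y` such that the Mañé vector
`Φ_{·,i₀}(y,·)` is a critical (viscosity) solution on the whole torus; this is
independent of the index `i₀`. -/
def MAubry {N m : ℕ} (H : Fin m → Euc N → Euc N → ℝ) (B : Euc N → Fin m → Fin m → ℝ) :
    Set (Euc N) :=
  {y | ∀ i₀ : Fin m,
    IsSubSol H B (fun _ => 0) (fun l x => Mane H B l i₀ y x) ∧
    IsSuperSol H B (fun _ => 0) (fun l x => Mane H B l i₀ y x)}

/-- The `i`-th component of a critical subsolution `v` is strict at `y`:
on some open neighbourhood `V` of `y` one has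
`H_i(x,Dv_i(x)) + (B(x)v(x))_i ≤ -δ` for a.e. `x ∈ V`. -/
def StrictAt {N m : ℕ} (H : Fin m → Euc N → Euc N → ℝ) (B : Euc N → Fin m → Fin m → ℝ)
    (v : Fin m → Euc N → ℝ) (i : Fin m) (y : Euc N) : Prop :=
  ∃ V : Set (Euc N), IsOpen V ∧ y ∈ V ∧ ∃ δ : ℝ, 0 < δ ∧
    ∀ᵐ x ∂(volume : Measure (Euc N)), x ∈ V →
      DifferentiableAt ℝ (v i) x ∧
      H i x (gradient (v i) x) + ∑ j, B x i j * v j x ≤ -δ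

/-- `p` is a reachable gradient of `w` at `y`: a limit of gradients of `w`
along a sequence of differentiability points converging to `y`. -/
def ReachableGrad {N : ℕ} (w : Euc N → ℝ) (y : Euc N) (p : Euc N) : Prop :=
  ∃ z : ℕ → Euc N, (∀ n, DifferentiableAt ℝ w (z n)) ∧
    Tendsto z atTop (nhds y) ∧
    Tendsto (fun n => gradient w (z n)) atTop (nhds p)

/-- Auxiliary: a kernel vector whose max is nonnegative is constant. -/
lemma kerAux {m : ℕ} (hm : 0 < m) (B : Matrix (Fin m) (Fin m) ℝ)
    (hC : IsCouplingMat (fun i j => B i j)) (hI : IsIrreducibleMat (fun i j => B i j))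
    (v : Fin m → ℝ) (hv : B.mulVec v = 0) (i₀ : Fin m)
    (hmax : ∀ j, v j ≤ v i₀) (hM : 0 ≤ v i₀) : ∀ j, v j = v i₀ := by
  obtain ⟨hoff, hrow⟩ := hC
  set M := v i₀ with hMdef
  set I : Finset (Fin m) := Finset.univ.filter (fun j => v j = M) with hIdef
  have hInonempty : I.Nonempty := ⟨i₀, by simp [hIdef, hMdef]⟩
  have hIuniv : I = Finset.univ := by
    by_contra hne
    obtain ⟨i, hiI, j₀, hj₀I, hbne⟩ := hI I hInonempty hne
    have hvi : v i = M := by simpa [hIdef] using hiI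
    have hvj₀ : v j₀ < M := by
      have : v j₀ ≠ M := by simpa [hIdef] using hj₀I
      exact lt_of_le_of_ne (hmax j₀) this
    have hj₀ne : j₀ ≠ i := by
      rintro rfl; exact absurd hvi (by simpa [hIdef] using hj₀I)
    have hbneg : B i j₀ < 0 := lt_of_le_of_ne (hoff i j₀ hj₀ne) hbne
    have hle : ∀ j, B i j * M ≤ B i j * v j := by
      intro j
      by_cases hji : j = i
      · subst hji; rw [hvi]
      · exact mul_le_mul_of_nonpos_left (hmax j) (hoff i j hji)
    have hlt : B i j₀ * M < B i j₀ * v j₀ := by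
      exact (mul_lt_mul_left_of_neg hbneg).mpr hvj₀
    have hsum : ∑ j, B i j * M < ∑ j, B i j * v j :=
      Finset.sum_lt_sum (fun j _ => hle j) ⟨j₀, Finset.mem_univ _, hlt⟩
    have h0 : ∑ j, B i j * v j = 0 := by
      have := congrFun hv i
      simpa [Matrix.mulVec, dotProduct] using this
    have h1 : (0:ℝ) ≤ ∑ j, B i j * M := by
      rw [← Finset.sum_mul]
      exact mul_nonneg (hrow i) hM
    linarith
  intro j
  have : j ∈ I := hIuniv ▸ Finset.mem_univ j
  simpa [hIdef] using this

lemma kerConst {m : ℕ} (hm : 0 < m) (B : Matrix (Fin m) (Fin m) ℝ)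
    (hC : IsCouplingMat (fun i j => B i j)) (hI : IsIrreducibleMat (fun i j => B i j))
    (v : Fin m → ℝ) (hv : B.mulVec v = 0) : ∃ c : ℝ, v = fun _ => c := by
  have hne : (Finset.univ : Finset (Fin m)).Nonempty := by
    simpa [Finset.univ_nonempty_iff] using Fin.pos_iff_nonempty.mp hm
  obtain ⟨i₀, -, hi₀⟩ := Finset.exists_max_image Finset.univ v hne
  have hmax : ∀ j, v j ≤ v i₀ := fun j => hi₀ j (Finset.mem_univ _)
  by_cases hM : 0 ≤ v i₀
  · exact ⟨v i₀, funext (kerAux hm B hC hI v hv i₀ hmax hM)⟩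
  · -- apply to -v ; max of -v is at some index with positive value
    obtain ⟨i₁, -, hi₁⟩ := Finset.exists_max_image Finset.univ (fun j => -v j) hne
    have hmax1 : ∀ j, -v j ≤ -v i₁ := fun j => hi₁ j (Finset.mem_univ _)
    have hM1 : 0 ≤ -v i₁ := le_trans (by linarith [hmax i₁, not_le.mp hM] : (0:ℝ) ≤ -v i₀)
      (hmax1 i₀)
    have hv' : B.mulVec (fun j => -v j) = 0 := by
      have : B.mulVec (-v) = -(B.mulVec v) := by
        simp [Matrix.mulVec_neg]
      have h' : B.mulVec (-v) = 0 := by simpa [hv] using this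
      exact h'
    have := kerAux hm B hC hI (fun j => -v j) hv' i₁ hmax1 hM1
    exact ⟨v i₁, funext fun j => by have h := this j; linarith⟩

/-- kernel of an irreducible coupling matrix. -/
theorem stmt0 {m : ℕ} (hm : 0 < m) (B : Matrix (Fin m) (Fin m) ℝ)
    (hC : IsCouplingMat (fun i j => B i j)) (hI : IsIrreducibleMat (fun i j => B i j)) :
    (∀ v : Fin m → ℝ, B.mulVec v = 0 → ∃ c : ℝ, v = fun _ => c) ∧
    (({v : Fin m → ℝ | B.mulVec v = 0} = Set.range (fun c : ℝ => (fun _ : Fin m => c))) ↔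
      IsDegenerateMat (fun i j => B i j)) ∧
    (IsUnit B ↔ ∃ i, 0 < ∑ j, B i j) := by
  have hker := kerConst hm B hC hI
  have hmulconst : ∀ c : ℝ, ∀ i, B.mulVec (fun _ => c) i = c * ∑ j, B i j := by
    intro c i
    simp [Matrix.mulVec, dotProduct, Finset.mul_sum, mul_comm]
  refine ⟨hker, ?_, ?_⟩
  · constructor
    · intro h i
      have h1 : (fun _ : Fin m => (1:ℝ)) ∈ {v : Fin m → ℝ | B.mulVec v = 0} := by
        rw [h]; exact ⟨1, rfl⟩
      have := congrFun h1 i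
      have h2 : B.mulVec (fun _ => (1:ℝ)) i = ∑ j, B i j := by
        rw [hmulconst]; ring
      rw [h2] at this; simpa using this
    · intro hd
      ext v
      constructor
      · intro hv
        obtain ⟨c, rfl⟩ := hker v hv
        exact ⟨c, rfl⟩
      · rintro ⟨c, rfl⟩
        funext i
        rw [hmulconst c i, hd i]
        simp
  · constructor
    · intro hB
      by_contra hno
      push_neg at hno
      have hd : IsDegenerateMat (fun i j => B i j) := fun i =>
        le_antisymm (hno i) (hC.2 i)
      have h1 : B.mulVec (fun _ => (1:ℝ)) = 0 := by
        funext i; rw [hmulconst 1 i, hd i]; simp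
      have hinj := Matrix.mulVec_injective_iff_isUnit.mpr hB
      have h0 : B.mulVec (fun _ => (0:ℝ)) = 0 := by
        funext i; rw [hmulconst 0 i]; simp
      have := hinj (h1.trans h0.symm)
      have := congrFun this ⟨0, hm⟩
      norm_num at this
    · rintro ⟨i, hi⟩
      rw [← Matrix.mulVec_injective_iff_isUnit]
      have hkerz : ∀ v, B.mulVec v = 0 → v = 0 := by
        intro v hv
        obtain ⟨c, rfl⟩ := hker v hv
        have := congrFun hv i
        rw [hmulconst c i] at this
        have hc : c = 0 := by
          rcases mul_eq_zero.mp this with h | h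
          · exact h
          · exact absurd h (ne_of_gt hi)
        subst hc; rfl
      intro v w hvw
      have : B.mulVec (v - w) = 0 := by
        rw [Matrix.mulVec_sub, hvw, sub_self]
      have := hkerz _ this
      exact sub_eq_zero.mp this

end
end

section
/- Let B be an m×m coupling matrix that is degenerate. If a = (a_1,…,a_m) ∈ ℝ^m satisfies a_i > 0 for every i ∈ {1,…,m}, then a does not belong to the image of B. -/
open Filter MeasureTheory

noncomputable section

/-- a strictly positive vector is not in the image of a degenerate
coupling matrix. -/
theorem stmt1 {m : ℕ} (hm : 0 < m) (B : Matrix (Fin m) (Fin m) ℝ)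
    (hC : IsCouplingMat (fun i j => B i j)) (hD : IsDegenerateMat (fun i j => B i j))
    (a : Fin m → ℝ) (ha : ∀ i, 0 < a i) :
    ¬ ∃ v : Fin m → ℝ, B.mulVec v = a := by
  rintro ⟨v, hv⟩
  haveI : Nonempty (Fin m) := ⟨⟨0, hm⟩⟩
  obtain ⟨i, -, hi⟩ := Finset.exists_min_image Finset.univ v Finset.univ_nonempty
  have key : a i = ∑ j, B i j * (v j - v i) := by
    have h1 : a i = ∑ j, B i j * v j := by
      rw [← hv]; simp [Matrix.mulVec, dotProduct]
    have h2 : (∑ j, B i j) * v i = 0 := by rw [hD i]; ring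
    rw [h1]
    rw [← sub_zero (∑ j, B i j * v j), ← h2, Finset.sum_mul]
    rw [← Finset.sum_sub_distrib]
    exact Finset.sum_congr rfl fun j _ => by ring
  have : a i ≤ 0 := by
    rw [key]
    apply Finset.sum_nonpos
    intro j _
    rcases eq_or_ne j i with rfl | hji
    · simp
    · exact mul_nonpos_of_nonpos_of_nonneg (hC.1 i j hji)
        (sub_nonneg.mpr (hi j (Finset.mem_univ j)))
  exact absurd this (not_le.mpr (ha i))

end
end

section
/- For every a = (a_1,…,a_m) ∈ ℝ^m there exists a constant M ≥ 0, depending only on a and on B(·), such that every continuous function u = (u_1,…,u_m) : T^N → ℝ^m satisfying (B(x)u(x))_i ≤ a_i for every x ∈ T^N and every i ∈ {1,…,m} obeys: (i) sup_{x∈T^N} |u_i(x) − u_j(x)| ≤ M for all i,j ∈ {1,…,m}; (ii) |(B(x)u(x))_i| ≤ M for every x ∈ T^N and every i ∈ {1,…,m}. -/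
open Filter MeasureTheory

noncomputable section

section AuxStmt2
open Finset

/-- reduction to a compact fundamental domain -/
lemma reduce {N : ℕ} (hN : 0 < N) (x : Euc N) :
    ∃ y ∈ Metric.closedBall (0 : Euc N) N, ∃ k : Fin N → ℤ, x = y + intVec k := by
  set k : Fin N → ℤ := fun i => ⌊x i⌋ with hk
  refine ⟨x - intVec k, ?_, k, by abel⟩
  rw [Metric.mem_closedBall, dist_zero_right]
  have hnorm : ‖x - intVec k‖ = Real.sqrt (∑ i, ‖(x - intVec k) i‖ ^ 2) :=
    EuclideanSpace.norm_eq _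
  rw [hnorm]
  have hsum : (∑ i, ‖(x - intVec k) i‖ ^ 2) ≤ (N : ℝ) := by
    calc (∑ i, ‖(x - intVec k) i‖ ^ 2) ≤ ∑ _i : Fin N, (1 : ℝ) := by
          apply Finset.sum_le_sum
          intro i _
          have h1 : (x - intVec k) i = x i - (⌊x i⌋ : ℝ) := by rw [PiLp.sub_apply]; rfl
          rw [h1, Real.norm_eq_abs]
          have h2 := Int.fract_nonneg (x i)
          have h3 := Int.fract_lt_one (x i)
          rw [Int.fract] at h2 h3
          rw [abs_of_nonneg h2]
          nlinarith
      _ = (N : ℝ) := by simp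
  have hN1 : (1 : ℝ) ≤ N := by exact_mod_cast hN
  calc Real.sqrt (∑ i, ‖(x - intVec k) i‖ ^ 2) ≤ Real.sqrt ((N : ℝ) ^ 2) :=
        Real.sqrt_le_sqrt (hsum.trans (by nlinarith))
    _ = N := Real.sqrt_sq (by positivity)

/-- a continuous periodic function attains a global minimum -/
lemma periodic_min {N : ℕ} (hN : 0 < N) {f : Euc N → ℝ} (hc : Continuous f)
    (hp : ZPeriodic f) : ∃ x₀ : Euc N, ∀ x, f x₀ ≤ f x := by
  obtain ⟨x₀, _, hmin⟩ :=
    (isCompact_closedBall (0 : Euc N) N).exists_isMinOn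
      ⟨0, Metric.mem_closedBall_self (by positivity)⟩ hc.continuousOn
  refine ⟨x₀, fun x => ?_⟩
  obtain ⟨y, hy, k, rfl⟩ := reduce hN x
  rw [hp y k]
  exact hmin hy

lemma periodic_max {N : ℕ} (hN : 0 < N) {f : Euc N → ℝ} (hc : Continuous f)
    (hp : ZPeriodic f) : ∃ x₀ : Euc N, ∀ x, f x ≤ f x₀ := by
  obtain ⟨x₀, hx₀⟩ := periodic_min hN (f := fun x => -f x) hc.neg
    (fun x k => by simp [hp x k])
  exact ⟨x₀, fun x => by have := hx₀ x; linarith⟩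

/-- The recursive bound. -/
def bnd (m : ℕ) (A C ε : ℝ) : ℕ → ℝ
  | 0 => 0
  | k + 1 => bnd m A C ε k + (A + (m : ℝ) * C * bnd m A C ε k) / ε

lemma bnd_nonneg {m : ℕ} {A C ε : ℝ} (hA : 0 ≤ A) (hC : 0 ≤ C) (hε : 0 < ε) :
    ∀ k, 0 ≤ bnd m A C ε k := by
  intro k
  induction k with
  | zero => simp [bnd]
  | succ k ih =>
    have : 0 ≤ (A + (m : ℝ) * C * bnd m A C ε k) / ε := by positivity
    simp only [bnd]; linarith

lemma bnd_mono {m : ℕ} {A C ε : ℝ} (hA : 0 ≤ A) (hC : 0 ≤ C) (hε : 0 < ε) (k : ℕ) :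
    bnd m A C ε k ≤ bnd m A C ε (k + 1) := by
  have h0 := bnd_nonneg (m := m) hA hC hε k
  have : 0 ≤ (A + (m : ℝ) * C * bnd m A C ε k) / ε := by positivity
  simp only [bnd]; linarith

lemma row_rewrite {m : ℕ} (c : Fin m → ℝ) (v : Fin m → ℝ) (t : ℝ)
    (hdeg : ∑ j, c j = 0) : ∑ l, c l * v l = ∑ l, c l * (v l - t) := by
  have h1 : ∑ l, c l * (v l - t) = ∑ l, c l * v l - (∑ l, c l) * t := by
    rw [Finset.sum_mul, ← Finset.sum_sub_distrib]
    exact Finset.sum_congr rfl fun l _ => by ring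
  rw [h1, hdeg, zero_mul, sub_zero]

/-- The key pointwise combinatorial lemma. -/
lemma key {m : ℕ} (hm : 0 < m) (A C ε : ℝ) (hA : 0 ≤ A) (hC0 : 0 ≤ C) (hε : 0 < ε)
    (c : Fin m → Fin m → ℝ) (v a : Fin m → ℝ)
    (hcoup : ∀ i j, j ≠ i → c i j ≤ 0)
    (hdeg : ∀ i, ∑ j, c i j = 0)
    (hC : ∀ i j, |c i j| ≤ C)
    (hirr : ∀ I : Finset (Fin m), I.Nonempty → I ≠ Finset.univ →
      ∃ i ∈ I, ∃ j, j ∉ I ∧ ε ≤ -(c i j))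
    (ha : ∀ i, a i ≤ A)
    (hineq : ∀ i, ∑ l, c i l * v l ≤ a i) :
    ∀ i j, |v i - v j| ≤ bnd m A C ε m := by
  haveI : Nonempty (Fin m) := ⟨⟨0, hm⟩⟩
  obtain ⟨i₁, hi₁⟩ := Finite.exists_max v
  have hb0 := fun k => bnd_nonneg (m := m) hA hC0 hε k
  have hbm := fun k => bnd_mono (m := m) hA hC0 hε k
  have main : ∀ k : ℕ, ∃ I : Finset (Fin m), i₁ ∈ I ∧ min k m ≤ I.card ∧
      ∀ i ∈ I, v i₁ - v i ≤ bnd m A C ε k := by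
    intro k
    induction k with
    | zero =>
      refine ⟨{i₁}, Finset.mem_singleton_self i₁, by simp, ?_⟩
      intro i hi
      rw [Finset.mem_singleton] at hi
      subst hi
      simp [bnd]
    | succ k ih =>
      obtain ⟨I, hi₁I, hcard, hIb⟩ := ih
      by_cases hIu : I = Finset.univ
      · refine ⟨I, hi₁I, ?_, fun i hi => (hIb i hi).trans (hbm k)⟩
        rw [hIu, Finset.card_univ, Fintype.card_fin]
        exact min_le_right _ _
      · obtain ⟨i, hiI, j, hjI, hεij⟩ := hirr I ⟨i₁, hi₁I⟩ hIu
        have h1 : ∑ l, c i l * (v l - v i) ≤ A :=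
          (row_rewrite (c i) v (v i) (hdeg i)) ▸ ((hineq i).trans (ha i))
        have h2 : ∑ l, c i l * (v l - v i)
            = c i j * (v j - v i) + ∑ l ∈ Finset.univ.erase j, c i l * (v l - v i) :=
          (Finset.add_sum_erase _ _ (Finset.mem_univ j)).symm
        have h3 : ∑ l ∈ Finset.univ.erase j, (-(c i l)) * (v l - v i)
            ≤ (m : ℝ) * (C * bnd m A C ε k) := by
          calc ∑ l ∈ Finset.univ.erase j, (-(c i l)) * (v l - v i)
              ≤ ∑ _l ∈ Finset.univ.erase j, C * bnd m A C ε k := by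
                apply Finset.sum_le_sum
                intro l _
                rcases eq_or_ne l i with rfl | hli
                · have : v l - v l = 0 := sub_self _
                  rw [this, mul_zero]
                  exact mul_nonneg hC0 (hb0 k)
                · have t1 : 0 ≤ -(c i l) := neg_nonneg.2 (hcoup i l hli)
                  have t2 : -(c i l) ≤ C := by
                    have := (abs_le.mp (hC i l)).1; linarith
                  have t3 : v l - v i ≤ bnd m A C ε k := by
                    have := hIb i hiI; have := hi₁ l; linarith
                  calc (-(c i l)) * (v l - v i) ≤ (-(c i l)) * bnd m A C ε k :=
                        mul_le_mul_of_nonneg_left t3 t1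
                    _ ≤ C * bnd m A C ε k := mul_le_mul_of_nonneg_right t2 (hb0 k)
            _ = ((Finset.univ.erase j).card : ℝ) * (C * bnd m A C ε k) := by
                rw [Finset.sum_const, nsmul_eq_mul]
            _ ≤ (m : ℝ) * (C * bnd m A C ε k) := by
                apply mul_le_mul_of_nonneg_right _ (mul_nonneg hC0 (hb0 k))
                have : (Finset.univ.erase j).card ≤ m := by
                  calc (Finset.univ.erase j).card ≤ Finset.univ.card :=
                        Finset.card_le_card (Finset.erase_subset _ _)
                    _ = m := by rw [Finset.card_univ, Fintype.card_fin]
                exact_mod_cast this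
        have hT : -∑ l ∈ Finset.univ.erase j, c i l * (v l - v i)
            = ∑ l ∈ Finset.univ.erase j, (-(c i l)) * (v l - v i) := by
          rw [← Finset.sum_neg_distrib]
          exact Finset.sum_congr rfl fun l _ => by ring
        have h4 : (-(c i j)) * (v i - v j) ≤ A + (m : ℝ) * (C * bnd m A C ε k) := by
          have e : (-(c i j)) * (v i - v j) = c i j * (v j - v i) := by ring
          rw [e]
          linarith [h1, h2, h3, hT]
        have h5 : v i - v j ≤ (A + (m : ℝ) * C * bnd m A C ε k) / ε := by
          rcases le_or_gt (v i - v j) 0 with h | h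
          · exact h.trans (div_nonneg
              (add_nonneg hA (mul_nonneg (mul_nonneg (by positivity) hC0) (hb0 k))) hε.le)
          · rw [le_div_iff₀ hε]
            nlinarith [hεij, h4, h]
        have h6 : v i₁ - v j ≤ bnd m A C ε (k + 1) := by
          have hvi : v i₁ - v i ≤ bnd m A C ε k := hIb i hiI
          have hbnd : bnd m A C ε (k + 1)
              = bnd m A C ε k + (A + (m : ℝ) * C * bnd m A C ε k) / ε := rfl
          rw [hbnd]; linarith
        refine ⟨insert j I, Finset.mem_insert_of_mem hi₁I, ?_, ?_⟩
        · rw [Finset.card_insert_of_notMem hjI]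
          omega
        · intro i' hi'
          rcases Finset.mem_insert.mp hi' with rfl | hi'I
          · exact h6
          · exact (hIb i' hi'I).trans (hbm k)
  obtain ⟨I, _, hcard, hIb⟩ := main m
  have h7 : Fintype.card (Fin m) ≤ I.card := by simpa [Fintype.card_fin] using hcard
  have hIuniv : I = Finset.univ :=
    Finset.eq_univ_of_card I (le_antisymm
      (by simpa [Finset.card_univ] using Finset.card_le_univ I) h7)
  have hall : ∀ l, v i₁ - v l ≤ bnd m A C ε m :=
    fun l => hIb l (hIuniv ▸ Finset.mem_univ l)
  intro i j
  rw [abs_sub_le_iff]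
  constructor
  · have := hi₁ i; have := hall j; linarith
  · have := hi₁ j; have := hall i; linarith

/-- uniform bound on the entries of the coupling field -/
lemma exists_entry_bound {N m : ℕ} (hN : 0 < N) (B : Euc N → Fin m → Fin m → ℝ)
    (hB : IsCouplingField B) : ∃ C : ℝ, 0 ≤ C ∧ ∀ x i j, |B x i j| ≤ C := by
  set G : Euc N → ℝ := fun x => ∑ i, ∑ j, |B x i j| with hG
  have hGc : Continuous G := by
    apply continuous_finset_sum
    intro i _
    exact continuous_finset_sum _ fun j _ => (hB.1 i j).abs
  have hGp : ZPeriodic G := by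
    intro x k
    simp only [hG]
    exact Finset.sum_congr rfl fun i _ => Finset.sum_congr rfl fun j _ =>
      congrArg abs (hB.2.1 i j x k)
  obtain ⟨x₁, hx₁⟩ := periodic_max hN hGc hGp
  refine ⟨G x₁, ?_, ?_⟩
  · exact Finset.sum_nonneg fun i _ => Finset.sum_nonneg fun j _ => abs_nonneg _
  · intro x i j
    refine le_trans ?_ (hx₁ x)
    calc |B x i j| ≤ ∑ j', |B x i j'| :=
          Finset.single_le_sum (f := fun j' => |B x i j'|)
            (fun j' _ => abs_nonneg _) (Finset.mem_univ j)
      _ ≤ G x := Finset.single_le_sum (f := fun i' => ∑ j', |B x i' j'|)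
          (fun i' (_ : i' ∈ Finset.univ) => Finset.sum_nonneg fun j' _ => abs_nonneg _)
          (Finset.mem_univ i)

/-- uniform irreducibility constant -/
lemma exists_eps {N m : ℕ} (hN : 0 < N) (B : Euc N → Fin m → Fin m → ℝ)
    (hB : IsCouplingField B) :
    ∃ ε : ℝ, 0 < ε ∧ ∀ (x : Euc N) (I : Finset (Fin m)), I.Nonempty →
      I ≠ Finset.univ → ∃ i ∈ I, ∃ j, j ∉ I ∧ ε ≤ -(B x i j) := by
  have helper : ∀ I : Finset (Fin m), ∃ δ : ℝ, 0 < δ ∧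
      (I.Nonempty → I ≠ Finset.univ →
        ∀ x, ∃ i ∈ I, ∃ j, j ∉ I ∧ δ ≤ -(B x i j)) := by
    intro I
    by_cases hadm : I.Nonempty ∧ I ≠ Finset.univ
    · obtain ⟨hI, hIu⟩ := hadm
      set F : Euc N → ℝ := fun x => ∑ i ∈ I, ∑ j ∈ Iᶜ, -(B x i j) with hF
      have hFc : Continuous F :=
        continuous_finset_sum _ fun i _ =>
          continuous_finset_sum _ fun j _ => (hB.1 i j).neg
      have hFp : ZPeriodic F := by
        intro x k
        exact Finset.sum_congr rfl fun i _ => Finset.sum_congr rfl fun j _ =>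
          congrArg Neg.neg (hB.2.1 i j x k)
      obtain ⟨x₀, hx₀⟩ := periodic_min hN hFc hFp
      have hterm_nonneg : ∀ (x : Euc N), ∀ i ∈ I, ∀ j ∈ Iᶜ, 0 ≤ -(B x i j) := by
        intro x i hi j hj
        have hji : j ≠ i := fun h => (Finset.mem_compl.mp hj) (h ▸ hi)
        exact neg_nonneg.2 ((hB.2.2 x).1.1 i j hji)
      have hc : 0 < F x₀ := by
        obtain ⟨i, hi, j, hj, hne⟩ := (hB.2.2 x₀).2.2 I hI hIu
        have hji : j ≠ i := fun h => hj (h ▸ hi)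
        have hterm : 0 < -(B x₀ i j) :=
          lt_of_le_of_ne (hterm_nonneg x₀ i hi j (Finset.mem_compl.mpr hj))
            (fun h => hne (by linarith [h.symm]))
        calc (0 : ℝ) < -(B x₀ i j) := hterm
          _ ≤ ∑ j' ∈ Iᶜ, -(B x₀ i j') :=
            Finset.single_le_sum (fun j' hj' => hterm_nonneg x₀ i hi j' hj')
              (Finset.mem_compl.mpr hj)
          _ ≤ F x₀ := Finset.single_le_sum
              (fun i' hi' => Finset.sum_nonneg fun j' hj' => hterm_nonneg x₀ i' hi' j' hj')
              hi
      set c := F x₀ with hcdef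
      refine ⟨c / ((m : ℝ) * m + 1), by positivity, fun _ _ x => ?_⟩
      by_contra hcon
      push_neg at hcon
      have hbig : F x ≤ ∑ i ∈ I, ∑ j ∈ Iᶜ, c / ((m : ℝ) * m + 1) := by
        apply Finset.sum_le_sum
        intro i hi
        apply Finset.sum_le_sum
        intro j hj
        exact (hcon i hi j (Finset.mem_compl.mp hj)).le
      have hcards : (I.card : ℝ) * (Iᶜ.card : ℝ) ≤ (m : ℝ) * m := by
        have h1 : I.card ≤ m := by
          simpa [Fintype.card_fin] using Finset.card_le_univ I
        have h2 : Iᶜ.card ≤ m := by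
          simpa [Fintype.card_fin] using Finset.card_le_univ Iᶜ
        have := mul_le_mul (Nat.cast_le.mpr h1 : (I.card : ℝ) ≤ m)
          (Nat.cast_le.mpr h2 : (Iᶜ.card : ℝ) ≤ m) (by positivity) (by positivity)
        exact this
      have hsum : ∑ i ∈ I, ∑ j ∈ Iᶜ, c / ((m : ℝ) * m + 1)
          = (I.card : ℝ) * ((Iᶜ.card : ℝ) * (c / ((m : ℝ) * m + 1))) := by
        simp [Finset.sum_const, nsmul_eq_mul, mul_assoc]
      have hδpos : 0 < c / ((m : ℝ) * m + 1) := by positivity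
      have hlt : (I.card : ℝ) * ((Iᶜ.card : ℝ) * (c / ((m : ℝ) * m + 1))) < c := by
        have heq : ((m : ℝ) * m + 1) * (c / ((m : ℝ) * m + 1)) = c :=
          mul_div_cancel₀ _ (by positivity)
        nlinarith [hδpos, hcards, heq]
      have hxx := hx₀ x
      have hfin : F x ≤ (I.card : ℝ) * ((Iᶜ.card : ℝ) * (c / ((m : ℝ) * m + 1))) :=
        hsum ▸ hbig
      linarith
    · exact ⟨1, one_pos, fun h1 h2 => absurd ⟨h1, h2⟩ hadm⟩
  choose δ hδpos hδ using helper
  haveI : Nonempty (Finset (Fin m)) := ⟨∅⟩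
  refine ⟨Finset.univ.inf' Finset.univ_nonempty δ, ?_, ?_⟩
  · rw [Finset.lt_inf'_iff]
    exact fun I _ => hδpos I
  · intro x I hI hIu
    obtain ⟨i, hi, j, hj, hδle⟩ := hδ I hI hIu x
    exact ⟨i, hi, j, hj, le_trans (Finset.inf'_le δ (Finset.mem_univ I)) hδle⟩


end AuxStmt2

/-- a priori bounds for continuous functions satisfying
`(B(x)u(x))_i ≤ a_i`. -/
theorem stmt2 {N m : ℕ} (hN : 0 < N) (hm : 0 < m)
    (B : Euc N → Fin m → Fin m → ℝ) (hB : IsCouplingField B) (a : Fin m → ℝ) :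
    ∃ M : ℝ, 0 ≤ M ∧
      ∀ u : Fin m → Euc N → ℝ, (∀ i, Continuous (u i)) → (∀ i, ZPeriodic (u i)) →
        (∀ (x : Euc N) (i : Fin m), ∑ j, B x i j * u j x ≤ a i) →
        (∀ (x : Euc N) (i j : Fin m), |u i x - u j x| ≤ M) ∧
        (∀ (x : Euc N) (i : Fin m), |∑ j, B x i j * u j x| ≤ M) := by
  obtain ⟨C, hC0, hC⟩ := exists_entry_bound hN B hB
  obtain ⟨ε, hε, hirr⟩ := exists_eps hN B hB
  set A := ∑ i, |a i| with hAdef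
  have hA0 : 0 ≤ A := Finset.sum_nonneg fun i _ => abs_nonneg _
  have haA : ∀ i, a i ≤ A := fun i => (le_abs_self _).trans
    (Finset.single_le_sum (f := fun i => |a i|) (fun _ _ => abs_nonneg _)
      (Finset.mem_univ i))
  set D := bnd m A C ε m with hDdef
  have hD0 : 0 ≤ D := bnd_nonneg hA0 hC0 hε m
  have hMC0 : 0 ≤ (m : ℝ) * C * D :=
    mul_nonneg (mul_nonneg (by positivity) hC0) hD0
  refine ⟨D + (m : ℝ) * C * D, by linarith, ?_⟩
  intro u hu hup hineq
  have hdiff : ∀ (x : Euc N) (i j : Fin m), |u i x - u j x| ≤ D := by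
    intro x
    exact key hm A C ε hA0 hC0 hε (B x) (fun j => u j x) a
      ((hB.2.2 x).1.1) ((hB.2.2 x).2.1) (fun i j => hC x i j)
      (fun I h1 h2 => hirr x I h1 h2) haA (fun i => hineq x i)
  constructor
  · intro x i j
    exact (hdiff x i j).trans (by linarith)
  · intro x i
    have heq : ∑ j, B x i j * u j x = ∑ j, B x i j * (u j x - u i x) :=
      row_rewrite (B x i) (fun j => u j x) (u i x) ((hB.2.2 x).2.1 i)
    rw [heq]
    have hmassoc : (m : ℝ) * (C * D) = (m : ℝ) * C * D := (mul_assoc _ _ _).symm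
    calc |∑ j, B x i j * (u j x - u i x)| ≤ ∑ j, |B x i j * (u j x - u i x)| :=
          Finset.abs_sum_le_sum_abs _ _
      _ ≤ ∑ _j : Fin m, C * D := Finset.sum_le_sum fun j _ => by
          rw [abs_mul]
          exact mul_le_mul (hC x i j) (hdiff x j i) (abs_nonneg _) hC0
      _ = (m : ℝ) * (C * D) := by
          simp [Finset.sum_const, nsmul_eq_mul, Finset.card_univ]
      _ ≤ D + (m : ℝ) * C * D := by linarith

end
end

section
/- Let a ∈ ℝ^m and let v, u : T^N → ℝ^m be continuous functions that are, respectively, a viscosity subsolution and a viscosity supersolution of the system H_i(x,Du_i) + (B(x)u(x))_i = a_i in T^N (i = 1,…,m). Set M := max_{1≤i≤m} max_{x∈T^N} (v_i(x) − u_i(x)). If x₀ ∈ T^N is such that v_i(x₀) − u_i(x₀) = M for some index i ∈ {1,…,m}, then v(x₀) = u(x₀) + M𝟙, i.e. v_j(x₀) − u_j(x₀) = M for every j ∈ {1,…,m}. -/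
open Filter MeasureTheory

noncomputable section

open InnerProductSpace in
lemma hasGradientAt_testfun {F : Type*} [NormedAddCommGroup F] [InnerProductSpace ℝ F]
    [CompleteSpace F] (C c1 c2 : ℝ) (a b x : F) :
    HasGradientAt (fun y => C + c1 * (inner ℝ (y - a) (y - a) : ℝ) + c2 * (inner ℝ (y - b) (y - b) : ℝ))
      ((2*c1) • (x - a) + (2*c2) • (x - b)) x := by
  have hda : HasFDerivAt (fun y : F => y - a) (ContinuousLinearMap.id ℝ F) x :=
    (hasFDerivAt_id x).sub_const a
  have hdb : HasFDerivAt (fun y : F => y - b) (ContinuousLinearMap.id ℝ F) x :=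
    (hasFDerivAt_id x).sub_const b
  have h1 := (((hda.inner ℝ hda).const_mul c1).add ((hdb.inner ℝ hdb).const_mul c2)).const_add C
  have hfun : (fun y => C + c1 * (inner ℝ (y - a) (y - a) : ℝ) + c2 * (inner ℝ (y - b) (y - b) : ℝ))
      = fun y => C + (c1 * (inner ℝ (y - a) (y - a) : ℝ) + c2 * (inner ℝ (y - b) (y - b) : ℝ)) := by
    funext y; ring
  rw [hasGradientAt_iff_hasFDerivAt, hfun]
  have h2 : (toDual ℝ F) ((2*c1) • (x - a) + (2*c2) • (x - b))
      = c1 • (fderivInnerCLM ℝ (x - a, x - a)).comp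
          ((ContinuousLinearMap.id ℝ F).prod (ContinuousLinearMap.id ℝ F)) +
        c2 • (fderivInnerCLM ℝ (x - b, x - b)).comp
          ((ContinuousLinearMap.id ℝ F).prod (ContinuousLinearMap.id ℝ F)) := by
    ext p
    simp [fderivInnerCLM_apply, real_inner_smul_left, toDual_apply_apply, inner_sub_left,
      inner_sub_right, real_inner_comm, inner_add_left]
    ring
  rw [h2]
  exact h1

lemma contDiff_testfun {F : Type*} [NormedAddCommGroup F] [InnerProductSpace ℝ F]
    (C c1 c2 : ℝ) (a b : F) :
    ContDiff ℝ 1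
      (fun y => C + c1 * (inner ℝ (y - a) (y - a) : ℝ) + c2 * (inner ℝ (y - b) (y - b) : ℝ)) := by
  have h1 : ContDiff ℝ 1 (fun y : F => y - a) := contDiff_id.sub contDiff_const
  have h2 : ContDiff ℝ 1 (fun y : F => y - b) := contDiff_id.sub contDiff_const
  exact (contDiff_const.add (contDiff_const.mul (h1.inner ℝ h1))).add
    (contDiff_const.mul (h2.inner ℝ h2))

lemma bdd_of_ZPeriodic {N : ℕ} {f : Euc N → ℝ} (hc : Continuous f) (hp : ZPeriodic f) :
    ∃ C : ℝ, ∀ x, |f x| ≤ C := by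
  obtain ⟨C, hC⟩ := (isCompact_closedBall (0 : Euc N) N).exists_bound_of_continuousOn
    hc.continuousOn
  refine ⟨C, fun x => ?_⟩
  have hmem : x + intVec (fun i => -⌊x i⌋) ∈ Metric.closedBall (0 : Euc N) N := by
    rw [Metric.mem_closedBall, dist_zero_right]
    have hco : ∀ i, (x + intVec (fun i => -⌊x i⌋)) i = Int.fract (x i) := by
      intro i
      rw [PiLp.add_apply]
      simp only [intVec]
      show x i + ((-⌊x i⌋ : ℤ) : ℝ) = _
      rw [Int.fract]
      push_cast
      ring
    rw [EuclideanSpace.norm_eq]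
    have hNsq : (N : ℝ) ≤ (N : ℝ)^2 := by exact_mod_cast Nat.le_self_pow two_ne_zero N
    have hsum : (∑ i, ‖(x + intVec (fun i => -⌊x i⌋)) i‖ ^ 2) ≤ (N : ℝ) := by
      calc (∑ i, ‖(x + intVec (fun i => -⌊x i⌋)) i‖ ^ 2) ≤ ∑ _i : Fin N, (1:ℝ) := by
            refine Finset.sum_le_sum fun i _ => ?_
            rw [hco i, Real.norm_eq_abs, abs_of_nonneg (Int.fract_nonneg _)]
            nlinarith [Int.fract_lt_one (x i), Int.fract_nonneg (x i)]
        _ = N := by simp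
    calc Real.sqrt (∑ i, ‖(x + intVec (fun i => -⌊x i⌋)) i‖ ^ 2)
        ≤ Real.sqrt ((N:ℝ)^2) := Real.sqrt_le_sqrt (hsum.trans hNsq)
      _ = N := Real.sqrt_sq (Nat.cast_nonneg N)
  calc |f x| = ‖f (x + intVec (fun i => -⌊x i⌋))‖ := by rw [hp x]; rfl
    _ ≤ C := hC _ hmem

lemma le_max_one_of_sq_le {t c : ℝ} (ht : 0 ≤ t) (h : t^2 ≤ c) : t ≤ max 1 c := by
  rcases le_or_gt t 1 with h1 | h1
  · exact h1.trans (le_max_left _ _)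
  · refine le_trans ?_ (le_max_right _ _)
    nlinarith

lemma key_ineq {N m : ℕ} (hm : 0 < m)
    (H : Fin m → Euc N → Euc N → ℝ) (hH : ∀ i, IsConvexHamiltonian (H i))
    (B : Euc N → Fin m → Fin m → ℝ) (hB : IsCouplingField B) (a : Fin m → ℝ)
    (v u : Fin m → Euc N → ℝ) (hv : IsTorusFun v) (hu : IsTorusFun u)
    (hsub : IsSubSol H B a v) (hsup : IsSuperSol H B a u)
    (M : ℝ) (hub : ∀ (j : Fin m) (x : Euc N), v j x - u j x ≤ M)
    (x₀ : Euc N) (i : Fin m) (hatt : v i x₀ - u i x₀ = M) :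
    ∑ j, B x₀ i j * (v j x₀ - u j x₀) ≤ 0 := by
  classical
  -- bounds on v, u, B
  obtain ⟨Cv, hCv⟩ : ∃ C : ℝ, ∀ (j : Fin m) (x : Euc N), |v j x| ≤ C := by
    choose Cf hCf using fun j => bdd_of_ZPeriodic (hv.1 j) (hv.2 j)
    exact ⟨∑ j, |Cf j|, fun j x => (hCf j x).trans ((le_abs_self _).trans
      (Finset.single_le_sum (f := fun j => |Cf j|) (fun _ _ => abs_nonneg _)
        (Finset.mem_univ j)))⟩
  obtain ⟨Cu, hCu⟩ : ∃ C : ℝ, ∀ (j : Fin m) (x : Euc N), |u j x| ≤ C := by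
    choose Cf hCf using fun j => bdd_of_ZPeriodic (hu.1 j) (hu.2 j)
    exact ⟨∑ j, |Cf j|, fun j x => (hCf j x).trans ((le_abs_self _).trans
      (Finset.single_le_sum (f := fun j => |Cf j|) (fun _ _ => abs_nonneg _)
        (Finset.mem_univ j)))⟩
  obtain ⟨CB, hCB⟩ : ∃ C : ℝ, ∀ (i' j : Fin m) (x : Euc N), |B x i' j| ≤ C := by
    choose Cf hCf using fun (i' : Fin m) (j : Fin m) =>
      bdd_of_ZPeriodic (hB.1 i' j) (hB.2.1 i' j)
    refine ⟨∑ i', ∑ j, |Cf i' j|, fun i' j x => (hCf i' j x).trans ?_⟩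
    calc Cf i' j ≤ |Cf i' j| := le_abs_self _
      _ ≤ ∑ j', |Cf i' j'| :=
          Finset.single_le_sum (f := fun j' => |Cf i' j'|) (fun _ _ => abs_nonneg _)
            (Finset.mem_univ j)
      _ ≤ ∑ i'', ∑ j', |Cf i'' j'| :=
          Finset.single_le_sum (f := fun i'' => ∑ j', |Cf i'' j'|)
            (fun _ _ => Finset.sum_nonneg fun _ _ => abs_nonneg _) (Finset.mem_univ i')
  set E : ℝ := Cv + Cu - M with hE
  have hE0 : 0 ≤ E := by
    have h1 := abs_le.mp (hCv i x₀)
    have h2 := abs_le.mp (hCu i x₀)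
    simp only [hE]
    linarith [hatt]
  -- the doubling-of-variables construction, for each ε > 0
  have main : ∀ ε : ℝ, 0 < ε → ∃ x y q : Euc N,
      ‖x - x₀‖^2 ≤ E ∧ ‖x - y‖^2 ≤ ε * E ∧
      M ≤ v i x - u i y - ‖x - x₀‖^2 ∧
      H i x (q + (2:ℝ) • (x - x₀)) + ∑ j, B x i j * v j x ≤ a i ∧
      a i ≤ H i y q + ∑ j, B y i j * u j y := by
    intro ε hε
    set Φ : Euc N × Euc N → ℝ := fun p => v i p.1 - u i p.2
      - ε⁻¹ * (inner ℝ (p.1 - p.2) (p.1 - p.2) : ℝ) - (inner ℝ (p.1 - x₀) (p.1 - x₀) : ℝ) with hΦ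
    have hΦcont : Continuous Φ := by
      refine ((((hv.1 i).comp continuous_fst).sub ((hu.1 i).comp continuous_snd)).sub
        (continuous_const.mul
          ((continuous_fst.sub continuous_snd).inner (continuous_fst.sub continuous_snd)))).sub
        ((continuous_fst.sub continuous_const).inner (continuous_fst.sub continuous_const))
    have hΦx₀ : Φ (x₀, x₀) = M := by
      simp only [hΦ, sub_self, inner_zero_left]
      rw [← hatt]
      ring
    set K : Set (Euc N × Euc N) := {p | M ≤ Φ p} with hK
    have hKc : IsClosed K := isClosed_le continuous_const hΦcont
    have hx₀K : (x₀, x₀) ∈ K := by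
      simp only [hK, Set.mem_setOf_eq, hΦx₀, le_refl]
    have hΦnorm : ∀ p : Euc N × Euc N, Φ p = v i p.1 - u i p.2
        - ε⁻¹ * ‖p.1 - p.2‖^2 - ‖p.1 - x₀‖^2 := by
      intro p
      simp only [hΦ, real_inner_self_eq_norm_sq]
    have hKb : ∀ p ∈ K, ‖p.1 - x₀‖^2 ≤ E ∧ ‖p.1 - p.2‖^2 ≤ ε * E := by
      intro p hp
      have hp' : M ≤ v i p.1 - u i p.2 - ε⁻¹ * ‖p.1 - p.2‖^2 - ‖p.1 - x₀‖^2 := by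
        rw [← hΦnorm p]; exact hp
      have h1 := abs_le.mp (hCv i p.1)
      have h2 := abs_le.mp (hCu i p.2)
      have hinv : (0:ℝ) < ε⁻¹ := inv_pos.mpr hε
      have hs1 := sq_nonneg ‖p.1 - p.2‖
      have hs2 := sq_nonneg ‖p.1 - x₀‖
      constructor
      · simp only [hE]; nlinarith
      · have h3 : ε⁻¹ * ‖p.1 - p.2‖^2 ≤ E := by simp only [hE]; nlinarith
        calc ‖p.1 - p.2‖^2 = ε * (ε⁻¹ * ‖p.1 - p.2‖^2) := by
              field_simp
          _ ≤ ε * E := by nlinarith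
    have hKbdd : Bornology.IsBounded K := by
      refine (Metric.isBounded_closedBall
        (x := (x₀, x₀)) (r := max 1 E + max 1 (ε * E))).subset ?_
      intro p hp
      obtain ⟨hb1, hb2⟩ := hKb p hp
      rw [Metric.mem_closedBall, Prod.dist_eq]
      have hd1 : dist p.1 x₀ ≤ max 1 E := by
        rw [dist_eq_norm]
        exact le_max_one_of_sq_le (norm_nonneg _) hb1
      have hd2 : dist p.2 x₀ ≤ max 1 (ε * E) + max 1 E := by
        calc dist p.2 x₀ ≤ dist p.2 p.1 + dist p.1 x₀ := dist_triangle _ _ _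
          _ ≤ max 1 (ε * E) + max 1 E := by
              refine add_le_add ?_ hd1
              rw [dist_comm, dist_eq_norm]
              exact le_max_one_of_sq_le (norm_nonneg _) hb2
      refine max_le (hd1.trans ?_) (hd2.trans ?_) <;> [skip; linarith] 
      have : (0:ℝ) ≤ max 1 (ε * E) := le_trans zero_le_one (le_max_left _ _)
      linarith
    obtain ⟨w, hwK, hwmax⟩ := (Metric.isCompact_of_isClosed_isBounded hKc hKbdd).exists_isMaxOn
      ⟨(x₀, x₀), hx₀K⟩ hΦcont.continuousOn
    have hglob : ∀ p : Euc N × Euc N, Φ p ≤ Φ w := by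
      intro p
      by_cases hp : p ∈ K
      · exact hwmax hp
      · have : Φ p < M := lt_of_not_ge hp
        exact this.le.trans (hwK : M ≤ Φ w)
    obtain ⟨xe, ye⟩ := w
    have hflip : ∀ z w' : Euc N, (inner ℝ (z - w') (z - w') : ℝ) = (inner ℝ (w' - z) (w' - z) : ℝ) := by
      intro z w'
      rw [← neg_sub w' z, inner_neg_neg]
    -- subsolution test function
    set φ : Euc N → ℝ := fun z => u i ye + ε⁻¹ * (inner ℝ (z - ye) (z - ye) : ℝ)
      + 1 * (inner ℝ (z - x₀) (z - x₀) : ℝ) with hφ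
    have hφd : ContDiff ℝ 1 φ := contDiff_testfun _ _ _ _ _
    have hφmax : IsLocalMax (fun z => v i z - φ z) xe := by
      refine Filter.Eventually.of_forall fun z => ?_
      have h := hglob (z, ye)
      simp only [hΦ, hφ, one_mul, zero_mul] at h ⊢
      linarith
    have hsub1 := hsub i xe φ hφd hφmax
    set q : Euc N := (2*ε⁻¹) • (xe - ye) with hq
    have hgradφ' : gradient φ xe = q + (2:ℝ) • (xe - x₀) := by
      rw [hφ, (hasGradientAt_testfun (u i ye) ε⁻¹ 1 ye x₀ xe).gradient, hq, mul_one]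
    -- supersolution test function
    set ψ : Euc N → ℝ := fun z => (v i xe - (inner ℝ (xe - x₀) (xe - x₀) : ℝ))
      + (-ε⁻¹) * (inner ℝ (z - xe) (z - xe) : ℝ) + 0 * (inner ℝ (z - xe) (z - xe) : ℝ) with hψ
    have hψd : ContDiff ℝ 1 ψ := contDiff_testfun _ _ _ _ _
    have hψmin : IsLocalMin (fun z => u i z - ψ z) ye := by
      refine Filter.Eventually.of_forall fun z => ?_
      have h := hglob (xe, z)
      simp only [hΦ, hψ, one_mul, zero_mul] at h ⊢
      rw [← hflip z xe, ← hflip ye xe] at h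
      linarith
    have hsup1 := hsup i ye ψ hψd hψmin
    have hgradψ : gradient ψ ye = q := by
      rw [hψ, (hasGradientAt_testfun (v i xe - (inner ℝ (xe - x₀) (xe - x₀) : ℝ))
        (-ε⁻¹) 0 xe xe ye).gradient, hq]
      rw [mul_neg, neg_smul, mul_zero, zero_smul, add_zero, ← smul_neg, neg_sub]
    rw [hgradφ'] at hsub1
    rw [hgradψ] at hsup1
    refine ⟨xe, ye, q, (hKb (xe, ye) hwK).1, (hKb (xe, ye) hwK).2, ?_, hsub1, hsup1⟩
    have h : M ≤ Φ (xe, ye) := hwK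
    rw [hΦnorm] at h
    have hinv : (0:ℝ) ≤ ε⁻¹ := le_of_lt (inv_pos.mpr hε)
    have hs1 := sq_nonneg ‖xe - ye‖
    nlinarith
  -- extract the sequence
  have hεpos : ∀ n : ℕ, (0:ℝ) < ((n:ℝ)+1)⁻¹ := fun n => by positivity
  choose x y q h1 h2 h3 h4 h5 using fun n : ℕ => main ((n:ℝ)+1)⁻¹ (hεpos n)
  -- bound on the gradients
  obtain ⟨α, β, hαt, hβt, hαβ⟩ := (hH i).2.2.2
  set C1 : ℝ := |a i| + m * (CB * Cv) with hC1
  have hsumb : ∀ z : Euc N, |∑ j, B z i j * v j z| ≤ m * (CB * Cv) := by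
    intro z
    calc |∑ j, B z i j * v j z| ≤ ∑ j, |B z i j * v j z| := Finset.abs_sum_le_sum_abs _ _
      _ ≤ ∑ _j : Fin m, CB * Cv := by
          refine Finset.sum_le_sum fun j _ => ?_
          rw [abs_mul]
          exact mul_le_mul (hCB i j z) (hCv j z) (abs_nonneg _)
            ((abs_nonneg _).trans (hCB i j z))
      _ = m * (CB * Cv) := by
          rw [Finset.sum_const, Finset.card_univ, Fintype.card_fin, nsmul_eq_mul]
  obtain ⟨R, hR⟩ := Filter.tendsto_atTop_atTop.mp hαt (C1 + 1)
  have hgb : ∀ n, ‖q n + (2:ℝ) • (x n - x₀)‖ ≤ R := by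
    intro n
    by_contra hcon
    push_neg at hcon
    have hα1 := hR _ hcon.le
    have hα2 := (hαβ (x n) (q n + (2:ℝ) • (x n - x₀))).1
    have h4' := h4 n
    have hb := abs_le.mp (hsumb (x n))
    have ha := le_abs_self (a i)
    simp only [hC1] at hα1
    linarith
  have hqb : ∀ n, ‖q n‖ ≤ R + 2 * max 1 E := by
    intro n
    have hx1 : ‖x n - x₀‖ ≤ max 1 E := le_max_one_of_sq_le (norm_nonneg _) (h1 n)
    calc ‖q n‖ = ‖(q n + (2:ℝ) • (x n - x₀)) - (2:ℝ) • (x n - x₀)‖ := by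
          rw [add_sub_cancel_right]
      _ ≤ ‖q n + (2:ℝ) • (x n - x₀)‖ + ‖(2:ℝ) • (x n - x₀)‖ := norm_sub_le _ _
      _ ≤ R + 2 * max 1 E := by
          refine add_le_add (hgb n) ?_
          rw [norm_smul, Real.norm_ofNat]
          linarith
  -- compactness and subsequence
  set S : Set (Euc N × Euc N) :=
    (Metric.closedBall x₀ (max 1 E)) ×ˢ (Metric.closedBall 0 (R + 2 * max 1 E)) with hS
  have hScomp : IsCompact S :=
    (isCompact_closedBall _ _).prod (isCompact_closedBall _ _)
  have hmemS : ∀ n, (x n, q n) ∈ S := by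
    intro n
    refine Set.mk_mem_prod ?_ ?_
    · rw [Metric.mem_closedBall, dist_eq_norm]
      exact le_max_one_of_sq_le (norm_nonneg _) (h1 n)
    · rw [Metric.mem_closedBall, dist_zero_right]
      exact hqb n
  obtain ⟨⟨xh, ph⟩, -, σ, hσ, hconv⟩ := hScomp.tendsto_subseq hmemS
  have xconv : Filter.Tendsto (fun k => x (σ k)) Filter.atTop (nhds xh) :=
    (continuous_fst.tendsto _).comp hconv
  have qconv : Filter.Tendsto (fun k => q (σ k)) Filter.atTop (nhds ph) :=
    (continuous_snd.tendsto _).comp hconv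
  -- x n - y n → 0
  have hd0 : Filter.Tendsto (fun n => x n - y n) Filter.atTop (nhds 0) := by
    rw [tendsto_zero_iff_norm_tendsto_zero]
    have hb : ∀ n : ℕ, ‖x n - y n‖ ≤ Real.sqrt (((n:ℝ)+1)⁻¹ * E) := by
      intro n
      rw [← Real.sqrt_sq (norm_nonneg (x n - y n))]
      exact Real.sqrt_le_sqrt (h2 n)
    have htend : Filter.Tendsto (fun n : ℕ => Real.sqrt (((n:ℝ)+1)⁻¹ * E))
        Filter.atTop (nhds 0) := by
      have h0 : Filter.Tendsto (fun n : ℕ => ((n:ℝ)+1)⁻¹ * E) Filter.atTop (nhds 0) := by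
        have := tendsto_one_div_add_atTop_nhds_zero_nat.mul_const E
        rw [zero_mul] at this
        simpa [one_div] using this
      have := (Real.continuous_sqrt.tendsto 0).comp h0
      rwa [Real.sqrt_zero] at this
    exact squeeze_zero (fun n => norm_nonneg _) hb htend
  have hd0σ : Filter.Tendsto (fun k => x (σ k) - y (σ k)) Filter.atTop (nhds 0) :=
    hd0.comp hσ.tendsto_atTop
  have yconv : Filter.Tendsto (fun k => y (σ k)) Filter.atTop (nhds xh) := by
    have := xconv.sub hd0σ
    simpa using this
  -- identify the limit point
  have hxh : xh = x₀ := by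
    have hnorm2 : Continuous fun z : Euc N => ‖z - x₀‖^2 :=
      ((continuous_id.sub continuous_const).norm).pow 2
    have hlim : Filter.Tendsto
        (fun k => v i (x (σ k)) - u i (y (σ k)) - ‖x (σ k) - x₀‖^2)
        Filter.atTop (nhds (v i xh - u i xh - ‖xh - x₀‖^2)) :=
      ((((hv.1 i).tendsto xh).comp xconv).sub (((hu.1 i).tendsto xh).comp yconv)).sub
        ((hnorm2.tendsto xh).comp xconv)
    have hge : M ≤ v i xh - u i xh - ‖xh - x₀‖^2 :=
      ge_of_tendsto' hlim fun k => h3 (σ k)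
    have hub' := hub i xh
    have hsq : ‖xh - x₀‖^2 = 0 :=
      le_antisymm (by linarith) (sq_nonneg _)
    have : ‖xh - x₀‖ = 0 := by
      exact pow_eq_zero_iff two_ne_zero |>.mp hsq
    exact sub_eq_zero.mp (norm_eq_zero.mp this)
  rw [hxh] at xconv yconv
  -- pass to the limit in the sub/supersolution inequalities
  have hLHS : Filter.Tendsto
      (fun k => (∑ j, B (x (σ k)) i j * v j (x (σ k))) - ∑ j, B (y (σ k)) i j * u j (y (σ k)))
      Filter.atTop (nhds ((∑ j, B x₀ i j * v j x₀) - ∑ j, B x₀ i j * u j x₀)) := by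
    refine Filter.Tendsto.sub ?_ ?_
    · exact tendsto_finset_sum _ fun j _ =>
        (((hB.1 i j).tendsto x₀).comp xconv).mul (((hv.1 j).tendsto x₀).comp xconv)
    · exact tendsto_finset_sum _ fun j _ =>
        (((hB.1 i j).tendsto x₀).comp yconv).mul (((hu.1 j).tendsto x₀).comp yconv)
  have harg : Filter.Tendsto (fun k => q (σ k) + (2:ℝ) • (x (σ k) - x₀))
      Filter.atTop (nhds ph) := by
    have hc : Filter.Tendsto (fun _ : ℕ => x₀) Filter.atTop (nhds x₀) := tendsto_const_nhds
    have h0 : Filter.Tendsto (fun k => x (σ k) - x₀) Filter.atTop (nhds 0) := by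
      have := xconv.sub hc
      rwa [sub_self] at this
    have h1 : Filter.Tendsto (fun k => (2:ℝ) • (x (σ k) - x₀)) Filter.atTop
        (nhds ((2:ℝ) • (0 : Euc N))) := h0.const_smul (2:ℝ)
    have := qconv.add h1
    rw [smul_zero, add_zero] at this
    exact this
  have hRHS : Filter.Tendsto
      (fun k => H i (y (σ k)) (q (σ k)) - H i (x (σ k)) (q (σ k) + (2:ℝ) • (x (σ k) - x₀)))
      Filter.atTop (nhds (H i x₀ ph - H i x₀ ph)) := by
    refine Filter.Tendsto.sub ?_ ?_
    · exact ((hH i).1.tendsto (x₀, ph)).comp (yconv.prodMk_nhds qconv)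
    · exact ((hH i).1.tendsto (x₀, ph)).comp (xconv.prodMk_nhds harg)
  have hcomp : ∀ k, (∑ j, B (x (σ k)) i j * v j (x (σ k)))
      - ∑ j, B (y (σ k)) i j * u j (y (σ k))
      ≤ H i (y (σ k)) (q (σ k)) - H i (x (σ k)) (q (σ k) + (2:ℝ) • (x (σ k) - x₀)) := by
    intro k
    have ha := h4 (σ k)
    have hb := h5 (σ k)
    linarith
  have hfinal := le_of_tendsto_of_tendsto' hLHS hRHS hcomp
  rw [sub_self] at hfinal
  calc ∑ j, B x₀ i j * (v j x₀ - u j x₀)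
      = (∑ j, B x₀ i j * v j x₀) - ∑ j, B x₀ i j * u j x₀ := by
        rw [← Finset.sum_sub_distrib]
        exact Finset.sum_congr rfl fun j _ => by ring
    _ ≤ 0 := hfinal

/-- at a point where the max of `v_i - u_i` is attained for some
index, it is attained for all indices. -/
theorem stmt4 {N m : ℕ} (hN : 0 < N) (hm : 0 < m)
    (H : Fin m → Euc N → Euc N → ℝ) (hH : ∀ i, IsConvexHamiltonian (H i))
    (B : Euc N → Fin m → Fin m → ℝ) (hB : IsCouplingField B) (a : Fin m → ℝ)
    (v u : Fin m → Euc N → ℝ) (hv : IsTorusFun v) (hu : IsTorusFun u)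
    (hsub : IsSubSol H B a v) (hsup : IsSuperSol H B a u)
    (M : ℝ) (hub : ∀ (i : Fin m) (x : Euc N), v i x - u i x ≤ M)
    (x₀ : Euc N) (i₀ : Fin m) (hatt : v i₀ x₀ - u i₀ x₀ = M) :
    ∀ j : Fin m, v j x₀ - u j x₀ = M := by
  classical
  by_contra hcon
  push_neg at hcon
  obtain ⟨j₀, hj₀⟩ := hcon
  set I : Finset (Fin m) := Finset.univ.filter (fun l => v l x₀ - u l x₀ = M) with hI
  have hmemI : ∀ l, l ∈ I ↔ v l x₀ - u l x₀ = M := by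
    intro l; simp [hI]
  have hne : I.Nonempty := ⟨i₀, (hmemI i₀).mpr hatt⟩
  have hIneq : I ≠ Finset.univ := by
    intro h
    exact hj₀ ((hmemI j₀).mp (h ▸ Finset.mem_univ j₀))
  obtain ⟨i, hiI, l, hlI, hBl⟩ := (hB.2.2 x₀).2.2 I hne hIneq
  have hkey := key_ineq hm H hH B hB a v u hv hu hsub hsup M hub x₀ i ((hmemI i).mp hiI)
  have hdeg : ∑ j, B x₀ i j * M = 0 := by
    rw [← Finset.sum_mul, (hB.2.2 x₀).2.1 i, zero_mul]
  have hsum : ∑ j, B x₀ i j * (v j x₀ - u j x₀ - M) ≤ 0 := by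
    have : ∑ j, B x₀ i j * (v j x₀ - u j x₀ - M)
        = (∑ j, B x₀ i j * (v j x₀ - u j x₀)) - ∑ j, B x₀ i j * M := by
      rw [← Finset.sum_sub_distrib]
      exact Finset.sum_congr rfl fun j _ => by ring
    rw [this, hdeg]
    linarith
  have hterm : ∀ j ∈ Finset.univ, (0:ℝ) ≤ B x₀ i j * (v j x₀ - u j x₀ - M) := by
    intro j _
    rcases eq_or_ne j i with rfl | hji
    · have := (hmemI j).mp hiI
      rw [this]
      simp
    · have hb := (hB.2.2 x₀).1.1 i j hji
      have hvu := hub j x₀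
      nlinarith
  have hzero : ∀ j ∈ Finset.univ, B x₀ i j * (v j x₀ - u j x₀ - M) = 0 :=
    (Finset.sum_eq_zero_iff_of_nonneg hterm).mp
      (le_antisymm hsum (Finset.sum_nonneg hterm))
  have hl := hzero l (Finset.mem_univ l)
  have : v l x₀ - u l x₀ - M = 0 := by
    rcases mul_eq_zero.mp hl with h | h
    · exact absurd h hBl
    · exact h
  exact hlI ((hmemI l).mpr (by linarith))

end
end

section
/- Let B(x) be an m×m matrix with continuous coefficients on T^N such that B(x) is an irreducible coupling matrix for every x ∈ T^N and B(x) is invertible for every x ∈ T^N. Let a ∈ ℝ^m and let v, u : T^N → ℝ^m be continuous functions that are, respectively, a viscosity subsolution and a viscosity supersolution of the system H_i(x,Du_i) + (B(x)u(x))_i = a_i in T^N (i = 1,…,m). Then v(x) ≤ u(x) componentwise for every x ∈ T^N. -/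
open Filter MeasureTheory

noncomputable section

open Topology

lemma periodic_exists_max {N : ℕ} {f : Euc N → ℝ} (hf : Continuous f) (hp : ZPeriodic f) :
    ∃ x₀, ∀ x, f x ≤ f x₀ := by
  set C : Set (Euc N) := {y : Euc N | ∀ i, y i ∈ Set.Icc (0:ℝ) 1} with hC
  have hCcl : IsClosed C := by
    have : C = ⋂ i, (fun y : Euc N => y i) ⁻¹' Set.Icc (0:ℝ) 1 := by
      ext y; simp [hC, Set.mem_iInter]
    rw [this]
    exact isClosed_iInter fun i => (isClosed_Icc).preimage ((continuous_apply i).comp (PiLp.continuous_ofLp 2 _))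
  have hCbd : Bornology.IsBounded C := by
    apply (Metric.isBounded_closedBall (x := (0 : Euc N)) (r := Real.sqrt N)).subset
    intro y hy
    simp only [Metric.mem_closedBall, dist_zero_right]
    rw [EuclideanSpace.norm_eq]
    apply Real.sqrt_le_sqrt
    calc ∑ i, ‖y i‖ ^ 2 ≤ ∑ _i : Fin N, (1:ℝ) := by
          apply Finset.sum_le_sum
          intro i _
          have := hy i
          have h1 : |y i| ≤ 1 := by
            rw [abs_le]; constructor <;> [linarith [this.1]; linarith [this.2]]
          calc ‖y i‖ ^ 2 = |y i| ^ 2 := by rw [Real.norm_eq_abs]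
            _ ≤ 1 ^ 2 := by apply pow_le_pow_left₀ (abs_nonneg _) h1
            _ = 1 := one_pow 2
      _ = (N : ℝ) := by simp
  have hCcomp : IsCompact C := Metric.isCompact_of_isClosed_isBounded hCcl hCbd
  have hCne : C.Nonempty := ⟨0, fun i => by simp⟩
  obtain ⟨x₀, _, hx₀⟩ := hCcomp.exists_isMaxOn hCne hf.continuousOn
  refine ⟨x₀, fun x => ?_⟩
  set k : Fin N → ℤ := fun i => -⌊x i⌋ with hk
  have hmem : x + intVec k ∈ C := by
    intro i
    have h0 : (x + intVec k) i = x i + (k i : ℝ) := by simp [intVec]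
    have : (x + intVec k) i = Int.fract (x i) := by
      rw [h0, hk, Int.fract]; push_cast; ring
    rw [this]
    exact ⟨Int.fract_nonneg _, le_of_lt (Int.fract_lt_one _)⟩
  calc f x = f (x + intVec k) := (hp x k).symm
    _ ≤ f x₀ := hx₀ hmem

lemma quad_grad {N : ℕ} (b x : Euc N) (c : ℝ) :
    HasGradientAt (fun z : Euc N => c * (inner ℝ (z - b) (z - b) : ℝ)) ((2*c) • (x - b)) x := by
  have h1 : HasFDerivAt (fun z : Euc N => z - b) (ContinuousLinearMap.id ℝ (Euc N)) x :=
    (hasFDerivAt_id x).sub_const b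
  have h2 := (h1.inner ℝ h1).const_mul c
  rw [hasGradientAt_iff_hasFDerivAt]
  refine h2.congr_fderiv ?_
  ext h
  simp only [fderivInnerCLM_apply, InnerProductSpace.toDual_apply_apply, real_inner_smul_left,
    ContinuousLinearMap.coe_smul', Pi.smul_apply, ContinuousLinearMap.coe_comp',
    Function.comp_apply, ContinuousLinearMap.prod_apply, ContinuousLinearMap.coe_id', id_eq,
    smul_eq_mul, real_inner_comm (x - b) h]
  ring

lemma grad_add {N : ℕ} {f g : Euc N → ℝ} {f' g' : Euc N} {x : Euc N}
    (hf : HasGradientAt f f' x) (hg : HasGradientAt g g' x) :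
    HasGradientAt (fun z => f z + g z) (f' + g') x := by
  rw [hasGradientAt_iff_hasFDerivAt] at *
  rw [map_add]
  exact hf.add hg

lemma quad_cd {N : ℕ} (b : Euc N) (c : ℝ) :
    ContDiff ℝ 1 (fun z : Euc N => c * (inner ℝ (z - b) (z - b) : ℝ)) :=
  contDiff_const.mul (ContDiff.inner ℝ (contDiff_id.sub contDiff_const)
    (contDiff_id.sub contDiff_const))

set_option maxHeartbeats 1000000 in
lemma keyStep {N m : ℕ} (H : Fin m → Euc N → Euc N → ℝ)
    (hHc : ∀ i, Continuous (fun q : Euc N × Euc N => H i q.1 q.2))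
    (hcoer : ∀ i, ∃ α : ℝ → ℝ, Tendsto α atTop atTop ∧ ∀ x p, α ‖p‖ ≤ H i x p)
    (B : Euc N → Fin m → Fin m → ℝ) (hBcont : ∀ i j, Continuous fun x => B x i j)
    (a : Fin m → ℝ) (v u : Fin m → Euc N → ℝ)
    (hvc : ∀ i, Continuous (v i)) (huc : ∀ i, Continuous (u i))
    (hsub : IsSubSol H B a v) (hsup : IsSuperSol H B a u)
    (i : Fin m)
    (C0 : ℝ) (hC0 : ∀ x y : Euc N, v i x - u i y ≤ C0)
    (CB : ℝ) (hCB : ∀ x : Euc N, a i - ∑ j, B x i j * v j x ≤ CB)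
    (M : ℝ) (x' : Euc N) (hM : ∀ y : Euc N, v i y - u i y ≤ M)
    (hMx : v i x' - u i x' = M) :
    ∑ j, B x' i j * (v j x' - u j x') ≤ 0 := by
  classical
  -- coercivity radius
  obtain ⟨α, hα, hαle⟩ := hcoer i
  obtain ⟨R, hR⟩ : ∃ R : ℝ, ∀ t : ℝ, R ≤ t → CB < α t := by
    have h := hα.eventually_gt_atTop CB
    rw [eventually_atTop] at h
    obtain ⟨R, hR⟩ := h
    exact ⟨R, fun t ht => hR t ht⟩
  set D : ℝ := C0 - M with hDdef
  have hD : 0 ≤ D := by have := hC0 x' x'; simp [hDdef]; linarith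
  set s : ℝ := Real.sqrt D + 1 with hsdef
  have hs : 0 < s := by positivity
  set K : Set (Euc N × Euc N) :=
    Metric.closedBall x' s ×ˢ Metric.closedBall x' (2*s) with hKdef
  set Fn : ℕ → Euc N × Euc N → ℝ := fun n z =>
    v i z.1 - u i z.2 - ((n:ℝ)+1) * ‖z.1 - z.2‖^2 - ‖z.1 - x'‖^2 with hFdef
  have hFx' : ∀ n, Fn n (x', x') = M := by
    intro n; simp [hFdef]; linarith [hMx]
  have hclaim : ∀ (n : ℕ) (z : Euc N × Euc N), M ≤ Fn n z →
      ((n:ℝ)+1) * ‖z.1 - z.2‖^2 ≤ D ∧ ‖z.1 - x'‖^2 ≤ D := by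
    intro n z hz
    have h1 := hC0 z.1 z.2
    have h2 : 0 ≤ ((n:ℝ)+1) * ‖z.1 - z.2‖^2 := by positivity
    have h3 : (0:ℝ) ≤ ‖z.1 - x'‖^2 := by positivity
    simp only [hFdef] at hz
    constructor <;> [skip; skip] <;> simp only [hDdef] <;> linarith
  have hsq : ∀ t D' : ℝ, 0 ≤ t → t^2 ≤ D' → t ≤ Real.sqrt D' := by
    intro t D' ht h
    calc t = Real.sqrt (t^2) := (Real.sqrt_sq ht).symm
      _ ≤ Real.sqrt D' := Real.sqrt_le_sqrt h
  have hKmem : ∀ (n : ℕ) (z : Euc N × Euc N), M ≤ Fn n z → z ∈ K := by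
    intro n z hz
    obtain ⟨h1, h2⟩ := hclaim n z hz
    have h12 : ‖z.1 - z.2‖^2 ≤ D := by
      nlinarith [sq_nonneg ‖z.1 - z.2‖, Nat.cast_nonneg (α := ℝ) n]
    have hb1 : ‖z.1 - x'‖ ≤ Real.sqrt D := hsq _ _ (norm_nonneg _) h2
    have hb2 : ‖z.1 - z.2‖ ≤ Real.sqrt D := hsq _ _ (norm_nonneg _) h12
    constructor
    · rw [Metric.mem_closedBall, dist_eq_norm]
      simp only [hsdef]; linarith
    · rw [Metric.mem_closedBall, dist_eq_norm]
      have : ‖z.2 - x'‖ ≤ ‖z.2 - z.1‖ + ‖z.1 - x'‖ := norm_sub_le_norm_sub_add_norm_sub _ _ _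
      rw [norm_sub_rev z.2 z.1] at this
      simp only [hsdef]; linarith
  have hKcomp : IsCompact K :=
    (isCompact_closedBall _ _).prod (isCompact_closedBall _ _)
  have hFcont : ∀ n, Continuous (Fn n) := by
    intro n
    simp only [hFdef]
    apply Continuous.sub
    apply Continuous.sub
    apply Continuous.sub ((hvc i).comp continuous_fst) ((huc i).comp continuous_snd)
    · exact continuous_const.mul (((continuous_fst.sub continuous_snd).norm).pow 2)
    · exact ((continuous_fst.sub continuous_const).norm).pow 2
  have hex : ∀ n : ℕ, ∃ z : Euc N × Euc N,
      z ∈ K ∧ (∀ z', Fn n z' ≤ Fn n z) ∧ M ≤ Fn n z := by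
    intro n
    have hKne : K.Nonempty := ⟨(x', x'), by
      constructor <;> rw [Metric.mem_closedBall, dist_self] <;> positivity⟩
    obtain ⟨z, hzK, hzmax⟩ := hKcomp.exists_isMaxOn hKne (hFcont n).continuousOn
    have hxK : (x', x') ∈ K := ⟨by rw [Metric.mem_closedBall, dist_self]; positivity,
      by rw [Metric.mem_closedBall, dist_self]; positivity⟩
    have hMz : M ≤ Fn n z := by
      have h2 : Fn n (x', x') ≤ Fn n z := hzmax hxK
      rw [hFx' n] at h2; exact h2
    refine ⟨z, hzK, fun z' => ?_, hMz⟩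
    by_cases h : M ≤ Fn n z'
    · exact hzmax (hKmem n z' h)
    · push_neg at h; linarith
  choose z hzK hzmax hzM using hex
  set p : ℕ → Euc N := fun n => (2*((n:ℝ)+1)) • ((z n).1 - (z n).2) with hpdef
  set q : ℕ → Euc N := fun n => (2:ℝ) • ((z n).1 - x') with hqdef
  have hVisc : ∀ n : ℕ,
      (∑ j, B ((z n).1) i j * v j ((z n).1)) - (∑ j, B ((z n).2) i j * u j ((z n).2)) ≤
        H i ((z n).2) (p n) - H i ((z n).1) (p n + q n) ∧ ‖p n + q n‖ ≤ R := by
    intro n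
    set c : ℝ := (n:ℝ)+1 with hc
    set φ : Euc N → ℝ := fun x =>
      c * (inner ℝ (x - (z n).2) (x - (z n).2) : ℝ) + (1:ℝ) * (inner ℝ (x - x') (x - x') : ℝ) with hφ
    have hφcd : ContDiff ℝ 1 φ := (quad_cd (z n).2 c).add (quad_cd x' 1)
    have hφgrad : gradient φ ((z n).1) = p n + q n := by
      have hga := grad_add (quad_grad (z n).2 ((z n).1) c) (quad_grad x' ((z n).1) 1)
      rw [hga.gradient]
      simp only [hpdef, hqdef, hc]
      norm_num
    have hmax : IsLocalMax (fun y => v i y - φ y) ((z n).1) := by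
      apply Filter.Eventually.of_forall
      intro x
      have h1 := hzmax n (x, (z n).2)
      simp only [hFdef] at h1
      simp only [hφ, real_inner_self_eq_norm_sq, hc]
      nlinarith [h1]
    have hsubI := hsub i ((z n).1) φ hφcd hmax
    rw [hφgrad] at hsubI
    set ψ : Euc N → ℝ := fun y => (-c) * (inner ℝ (y - (z n).1) (y - (z n).1) : ℝ) with hψ
    have hψcd : ContDiff ℝ 1 ψ := quad_cd (z n).1 (-c)
    have hψgrad : gradient ψ ((z n).2) = p n := by
      rw [(quad_grad (z n).1 ((z n).2) (-c)).gradient]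
      simp only [hpdef, hc]
      rw [mul_neg, neg_smul, ← smul_neg, neg_sub]
    have hmin : IsLocalMin (fun y => u i y - ψ y) ((z n).2) := by
      apply Filter.Eventually.of_forall
      intro y
      have h1 := hzmax n ((z n).1, y)
      simp only [hFdef] at h1
      simp only [hψ, real_inner_self_eq_norm_sq, hc]
      have e1 : ‖y - (z n).1‖ = ‖(z n).1 - y‖ := norm_sub_rev _ _
      have e2 : ‖(z n).2 - (z n).1‖ = ‖(z n).1 - (z n).2‖ := norm_sub_rev _ _
      rw [e1, e2]
      nlinarith [h1]
    have hsupI := hsup i ((z n).2) ψ hψcd hmin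
    rw [hψgrad] at hsupI
    have hbound : ‖p n + q n‖ ≤ R := by
      by_contra hcon
      push_neg at hcon
      have h1 := hR _ (le_of_lt hcon)
      have h2 := hαle ((z n).1) (p n + q n)
      have h3 := hCB ((z n).1)
      linarith
    exact ⟨by linarith, hbound⟩
  -- compactness and subsequence extraction
  have hTmem : ∀ n, (z n, p n + q n) ∈ K ×ˢ Metric.closedBall (0 : Euc N) R := fun n =>
    ⟨hzK n, by rw [Metric.mem_closedBall, dist_zero_right]; exact (hVisc n).2⟩
  obtain ⟨⟨⟨xl, yl⟩, gl⟩, _, σ, hσ, hTt⟩ :=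
    (hKcomp.prod (isCompact_closedBall (0 : Euc N) R)).tendsto_subseq hTmem
  have hx : Tendsto (fun k => (z (σ k)).1) atTop (𝓝 xl) :=
    ((continuous_fst.comp continuous_fst).tendsto (((xl, yl), gl))).comp hTt
  have hy : Tendsto (fun k => (z (σ k)).2) atTop (𝓝 yl) :=
    ((continuous_snd.comp continuous_fst).tendsto (((xl, yl), gl))).comp hTt
  have hg : Tendsto (fun k => p (σ k) + q (σ k)) atTop (𝓝 gl) :=
    (continuous_snd.tendsto (((xl, yl), gl))).comp hTt
  have hns : ∀ n, ‖(z n).1 - (z n).2‖^2 ≤ D / ((n:ℝ)+1) := by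
    intro n
    have h1 := (hclaim n (z n) (hzM n)).1
    rw [le_div_iff₀ (by positivity), mul_comm]
    exact h1
  have hxy0 : Tendsto (fun k => (z (σ k)).1 - (z (σ k)).2) atTop (𝓝 0) := by
    rw [tendsto_zero_iff_norm_tendsto_zero]
    have hb : ∀ k, ‖(z (σ k)).1 - (z (σ k)).2‖ ≤ Real.sqrt (D / ((k:ℝ)+1)) := by
      intro k
      apply hsq _ _ (norm_nonneg _)
      calc ‖(z (σ k)).1 - (z (σ k)).2‖^2 ≤ D / ((σ k : ℝ)+1) := hns (σ k)
        _ ≤ D / ((k:ℝ)+1) := by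
            apply div_le_div_of_nonneg_left hD (by positivity)
            have : (k:ℝ) ≤ (σ k : ℝ) := Nat.cast_le.mpr hσ.le_apply
            linarith
    have h0 : Tendsto (fun k : ℕ => D / ((k:ℝ)+1)) atTop (𝓝 0) :=
      tendsto_const_nhds.div_atTop
        (tendsto_atTop_add_const_right _ 1 tendsto_natCast_atTop_atTop)
    have h1 : Tendsto (fun k : ℕ => Real.sqrt (D / ((k:ℝ)+1))) atTop (𝓝 0) := by
      have h2 := (Real.continuous_sqrt.tendsto 0).comp h0
      simpa [Function.comp_def] using h2
    exact squeeze_zero (fun k => norm_nonneg _) hb h1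
  have hyx : yl = xl := by
    have h2 : Tendsto (fun k => (z (σ k)).1 - ((z (σ k)).1 - (z (σ k)).2)) atTop
        (𝓝 (xl - 0)) := hx.sub hxy0
    simp only [sub_sub_cancel, sub_zero] at h2
    exact tendsto_nhds_unique hy h2
  have hxlx' : xl = x' := by
    have hineq : ∀ k, M ≤ v i ((z (σ k)).1) - u i ((z (σ k)).2) - ‖(z (σ k)).1 - x'‖^2 := by
      intro k
      have h1 := hzM (σ k)
      simp only [hFdef] at h1
      nlinarith [sq_nonneg ‖(z (σ k)).1 - (z (σ k)).2‖,
        (Nat.cast_nonneg (σ k) : (0:ℝ) ≤ (σ k : ℝ))]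
    have hlim : Tendsto (fun k => v i ((z (σ k)).1) - u i ((z (σ k)).2) - ‖(z (σ k)).1 - x'‖^2)
        atTop (𝓝 (v i xl - u i yl - ‖xl - x'‖^2)) := by
      refine Tendsto.sub (Tendsto.sub ?_ ?_) ?_
      · exact ((hvc i).tendsto xl).comp hx
      · exact ((huc i).tendsto yl).comp hy
      · have hcn : Continuous fun w : Euc N => ‖w - x'‖^2 :=
          ((continuous_id.sub continuous_const).norm).pow 2
        exact (hcn.tendsto xl).comp hx
    have hM2 : M ≤ v i xl - u i yl - ‖xl - x'‖^2 := ge_of_tendsto' hlim hineq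
    rw [hyx] at hM2
    have h3 : ‖xl - x'‖^2 ≤ 0 := by linarith [hM xl]
    have h4 : ‖xl - x'‖ = 0 := by
      have h5 : ‖xl - x'‖^2 = 0 := le_antisymm h3 (sq_nonneg _)
      exact pow_eq_zero_iff (by norm_num : (2:ℕ) ≠ 0) |>.mp h5
    rw [← sub_eq_zero]
    exact norm_eq_zero.mp h4
  have hx2 : Tendsto (fun k => (z (σ k)).1) atTop (𝓝 x') := hxlx' ▸ hx
  have hy2 : Tendsto (fun k => (z (σ k)).2) atTop (𝓝 x') := by
    rw [← hxlx', ← hyx]; exact hy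
  have hq0 : Tendsto (fun k => q (σ k)) atTop (𝓝 0) := by
    have h2 : Tendsto (fun k => (2:ℝ) • ((z (σ k)).1 - x')) atTop
        (𝓝 ((2:ℝ) • (x' - x'))) := (hx2.sub tendsto_const_nhds).const_smul 2
    simpa [hqdef] using h2
  have hpt : Tendsto (fun k => p (σ k)) atTop (𝓝 gl) := by
    have h2 : Tendsto (fun k => (p (σ k) + q (σ k)) - q (σ k)) atTop (𝓝 (gl - 0)) :=
      hg.sub hq0
    simpa using h2
  have hLn : Tendsto (fun k => (∑ j, B ((z (σ k)).1) i j * v j ((z (σ k)).1)) -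
      (∑ j, B ((z (σ k)).2) i j * u j ((z (σ k)).2))) atTop
      (𝓝 ((∑ j, B x' i j * v j x') - (∑ j, B x' i j * u j x'))) := by
    have c1 : Continuous fun x : Euc N => ∑ j, B x i j * v j x :=
      continuous_finset_sum _ fun j _ => (hBcont i j).mul (hvc j)
    have c2 : Continuous fun x : Euc N => ∑ j, B x i j * u j x :=
      continuous_finset_sum _ fun j _ => (hBcont i j).mul (huc j)
    exact ((c1.tendsto x').comp hx2).sub ((c2.tendsto x').comp hy2)
  have hRn : Tendsto (fun k => H i ((z (σ k)).2) (p (σ k)) -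
      H i ((z (σ k)).1) (p (σ k) + q (σ k))) atTop (𝓝 (H i x' gl - H i x' gl)) := by
    refine Tendsto.sub ?_ ?_
    · exact ((hHc i).tendsto (x', gl)).comp (hy2.prodMk_nhds hpt)
    · exact ((hHc i).tendsto (x', gl)).comp (hx2.prodMk_nhds hg)
  have hfin : (∑ j, B x' i j * v j x') - (∑ j, B x' i j * u j x') ≤ 0 := by
    have h2 := le_of_tendsto_of_tendsto' hLn hRn (fun k => (hVisc (σ k)).1)
    simpa using h2
  calc ∑ j, B x' i j * (v j x' - u j x')
      = (∑ j, B x' i j * v j x') - (∑ j, B x' i j * u j x') := by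
        rw [← Finset.sum_sub_distrib]
        exact Finset.sum_congr rfl fun j _ => by ring
    _ ≤ 0 := hfin

/-- comparison principle when the (irreducible) coupling matrix is
everywhere invertible. -/
theorem stmt6 {N m : ℕ} (hN : 0 < N) (hm : 0 < m)
    (H : Fin m → Euc N → Euc N → ℝ) (hH : ∀ i, IsConvexHamiltonian (H i))
    (B : Euc N → Fin m → Fin m → ℝ)
    (hBcont : ∀ i j, Continuous fun x => B x i j)
    (hBper : ∀ i j, ZPeriodic fun x => B x i j)
    (hBC : ∀ x, IsCouplingMat (B x)) (hBI : ∀ x, IsIrreducibleMat (B x))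
    (hBinv : ∀ x : Euc N, IsUnit (Matrix.of fun i j => B x i j))
    (a : Fin m → ℝ)
    (v u : Fin m → Euc N → ℝ) (hv : IsTorusFun v) (hu : IsTorusFun u)
    (hsub : IsSubSol H B a v) (hsup : IsSuperSol H B a u) :
    ∀ (x : Euc N) (i : Fin m), v i x ≤ u i x := by
  classical
  have hHc : ∀ i, Continuous (fun q : Euc N × Euc N => H i q.1 q.2) := fun i => (hH i).1
  have hcoer : ∀ i, ∃ α : ℝ → ℝ, Tendsto α atTop atTop ∧ ∀ x p, α ‖p‖ ≤ H i x p := by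
    intro i
    obtain ⟨α, β, hα, hβ, hb⟩ := (hH i).2.2.2
    exact ⟨α, hα, fun x p => (hb x p).1⟩
  have hwper : ∀ i : Fin m, ZPeriodic (fun x => v i x - u i x) := by
    intro i x k; simp only; rw [hv.2 i x k, hu.2 i x k]
  have hwc : ∀ i : Fin m, Continuous (fun x => v i x - u i x) :=
    fun i => (hv.1 i).sub (hu.1 i)
  have hmaxv : ∀ i : Fin m, ∃ x₀, ∀ x, v i x - u i x ≤ v i x₀ - u i x₀ :=
    fun i => periodic_exists_max (hwc i) (hwper i)
  choose zz hzz using hmaxv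
  haveI : Nonempty (Fin m) := ⟨⟨0, hm⟩⟩
  obtain ⟨i0, _, hi0⟩ := Finset.exists_max_image (Finset.univ : Finset (Fin m))
    (fun i => v i (zz i) - u i (zz i)) Finset.univ_nonempty
  set x' := zz i0 with hx'def
  set M := v i0 x' - u i0 x' with hMdef
  have hMall : ∀ (j : Fin m) (y : Euc N), v j y - u j y ≤ M := by
    intro j y
    calc v j y - u j y ≤ v j (zz j) - u j (zz j) := hzz j y
      _ ≤ M := hi0 j (Finset.mem_univ j)
  by_contra hcon
  push_neg at hcon
  obtain ⟨x0, ii, hii⟩ := hcon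
  have hMpos : 0 < M := lt_of_lt_of_le (sub_pos.mpr hii) (hMall ii x0)
  have hkey : ∀ i : Fin m, v i x' - u i x' = M →
      ∑ j, B x' i j * (v j x' - u j x') ≤ 0 := by
    intro i hMx
    obtain ⟨xv, hxv⟩ := periodic_exists_max (hv.1 i) (hv.2 i)
    have hneguper : ZPeriodic (fun x => -(u i x)) := fun x k => by
      simp only [hu.2 i x k]
    obtain ⟨xu, hxu⟩ := periodic_exists_max (hu.1 i).neg hneguper
    have hC0 : ∀ x y : Euc N, v i x - u i y ≤ v i xv + -(u i xu) := by
      intro x y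
      have h1 := hxv x
      have h2 := hxu y
      simp only [Pi.neg_apply] at h2
      linarith
    have hfc : Continuous (fun x : Euc N => a i - ∑ j, B x i j * v j x) :=
      continuous_const.sub (continuous_finset_sum _ fun j _ => (hBcont i j).mul (hv.1 j))
    have hfper : ZPeriodic (fun x : Euc N => a i - ∑ j, B x i j * v j x) := by
      intro x k
      simp only
      congr 1
      exact Finset.sum_congr rfl fun j _ => by
        have hb : B (x + intVec k) i j = B x i j := hBper i j x k
        rw [hb, hv.2 j x k]
    obtain ⟨xb, hxb⟩ := periodic_exists_max hfc hfper
    exact keyStep H hHc hcoer B hBcont a v u hv.1 hu.1 hsub hsup i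
      (v i xv + -(u i xu)) hC0 (a i - ∑ j, B xb i j * v j xb) hxb M x'
      (fun y => hMall i y) hMx
  set I : Finset (Fin m) := Finset.univ.filter (fun j => v j x' - u j x' = M) with hIdef
  have hi0I : i0 ∈ I := Finset.mem_filter.mpr ⟨Finset.mem_univ _, hMdef.symm⟩
  have hprop : ∀ i ∈ I, (∑ j, B x' i j = 0) ∧ ∀ j, B x' i j ≠ 0 → j ∈ I := by
    intro i hiI
    have hMx : v i x' - u i x' = M := (Finset.mem_filter.mp hiI).2
    have hsum := hkey i hMx
    have hdec : ∑ j, B x' i j * (v j x' - u j x') =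
        (∑ j, B x' i j * ((v j x' - u j x') - M)) + M * ∑ j, B x' i j := by
      rw [Finset.mul_sum, ← Finset.sum_add_distrib]
      exact Finset.sum_congr rfl fun j _ => by ring
    have htnn : ∀ j ∈ (Finset.univ : Finset (Fin m)),
        0 ≤ B x' i j * ((v j x' - u j x') - M) := by
      intro j _
      by_cases hji : j = i
      · subst hji; rw [hMx]; simp
      · have hb : B x' i j ≤ 0 := (hBC x').1 i j hji
        have hw : v j x' - u j x' - M ≤ 0 := sub_nonpos.mpr (hMall j x')
        nlinarith
    have hrow0 : 0 ≤ ∑ j, B x' i j := (hBC x').2 i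
    have hts : 0 ≤ ∑ j, B x' i j * ((v j x' - u j x') - M) := Finset.sum_nonneg htnn
    have hMb : 0 ≤ M * ∑ j, B x' i j := mul_nonneg hMpos.le hrow0
    have hteq : ∑ j, B x' i j * ((v j x' - u j x') - M) = 0 := by
      rw [hdec] at hsum; linarith
    have hMbeq : M * ∑ j, B x' i j = 0 := by
      rw [hdec] at hsum; linarith
    constructor
    · rcases mul_eq_zero.mp hMbeq with h | h
      · exact absurd h (ne_of_gt hMpos)
      · exact h
    · intro j hbij
      have hterm := (Finset.sum_eq_zero_iff_of_nonneg htnn).mp hteq j (Finset.mem_univ j)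
      rcases mul_eq_zero.mp hterm with h | h
      · exact absurd h hbij
      · exact Finset.mem_filter.mpr ⟨Finset.mem_univ _, by linarith [sub_eq_zero.mp h]⟩
  have hIuniv : I = Finset.univ := by
    by_contra hne
    obtain ⟨i, hiI, j, hjI, hbij⟩ := hBI x' I ⟨i0, hi0I⟩ hne
    exact hjI ((hprop i hiI).2 j hbij)
  have hrows : ∀ i : Fin m, ∑ j, B x' i j = 0 := fun i =>
    (hprop i (hIuniv ▸ Finset.mem_univ i)).1
  obtain ⟨U, hU⟩ := hBinv x'
  have h1 : (Matrix.of fun i j => B x' i j).mulVec (fun _ => (1:ℝ)) = 0 := by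
    funext i
    simp [Matrix.mulVec, dotProduct, hrows i]
  have h2 : (fun _ => (1:ℝ)) = (0 : Fin m → ℝ) := by
    calc (fun _ => (1:ℝ))
        = (1 : Matrix (Fin m) (Fin m) ℝ).mulVec (fun _ => (1:ℝ)) := by
          rw [Matrix.one_mulVec]
      _ = ((↑U⁻¹ * Matrix.of fun i j => B x' i j) :
            Matrix (Fin m) (Fin m) ℝ).mulVec (fun _ => (1:ℝ)) := by
          rw [← hU, U.inv_mul]
      _ = (↑U⁻¹ : Matrix (Fin m) (Fin m) ℝ).mulVec
            ((Matrix.of fun i j => B x' i j).mulVec (fun _ => (1:ℝ))) := by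
          rw [Matrix.mulVec_mulVec]
      _ = 0 := by rw [h1, Matrix.mulVec_zero]
  have h3 := congrFun h2 ⟨0, hm⟩
  norm_num at h3


end
end

section
/- Let a, b ∈ ℝ and let v, u : T^N → ℝ^m be continuous functions such that, in the viscosity sense, H_i(x,Dv_i) + (B(x)v(x))_i ≤ a in T^N and H_i(x,Du_i) + (B(x)u(x))_i ≥ b in T^N for every i ∈ {1,…,m} (i.e. v is a viscosity subsolution of the system with right-hand side a𝟙 and u is a viscosity supersolution of the system with right-hand side b𝟙). Then b ≤ a. -/
open Filter MeasureTheory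

noncomputable section

/-! ### Auxiliary lemmas for the proof of `stmt7` -/

lemma stmt7.reduce_lem {N : ℕ} (x : Euc N) : ∃ k : Fin N → ℤ, ‖x + intVec k‖ ≤ N := by
  refine ⟨fun i => -⌊x i⌋, ?_⟩
  have hco : ∀ i, (x + intVec fun i => -⌊x i⌋) i = Int.fract (x i) := by
    intro i
    rw [PiLp.add_apply, intVec, PiLp.toLp_apply]
    rw [Int.fract]; push_cast; ring
  have h1 : ‖x + intVec fun i => -⌊x i⌋‖ ≤ Real.sqrt N := by
    rw [EuclideanSpace.norm_eq]
    apply Real.sqrt_le_sqrt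
    calc ∑ i, ‖(x + intVec fun i => -⌊x i⌋) i‖ ^ 2 ≤ ∑ _i : Fin N, 1 := by
          apply Finset.sum_le_sum
          intro i _
          rw [hco i]
          have h0 := Int.fract_nonneg (x i)
          have h2 := Int.fract_lt_one (x i)
          rw [Real.norm_eq_abs, abs_of_nonneg h0]
          nlinarith
      _ = (N : ℝ) := by simp
  refine h1.trans ?_
  have h2 : (N:ℝ) ≤ (N:ℝ)^2 := by exact_mod_cast Nat.le_self_pow two_ne_zero N
  calc Real.sqrt N ≤ Real.sqrt ((N:ℝ)^2) := Real.sqrt_le_sqrt h2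
    _ = N := Real.sqrt_sq (Nat.cast_nonneg N)

lemma stmt7.contdiff_lem {N : ℕ} (c : ℝ) (y : Euc N) :
    ContDiff ℝ 1 (fun z : Euc N => c * ‖z - y‖ ^ 2) :=
  contDiff_const.mul ((contDiff_id.sub contDiff_const).norm_sq ℝ)

lemma stmt7.grad_lem {N : ℕ} (c : ℝ) (y x : Euc N) :
    HasGradientAt (fun z : Euc N => c * ‖z - y‖ ^ 2) ((2 * c) • (x - y)) x := by
  have h1 : HasFDerivAt (fun z : Euc N => ‖z - y‖ ^ 2)
      (2 • (innerSL ℝ (x - y)).comp (ContinuousLinearMap.id ℝ (Euc N))) x := by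
    simpa using ((hasFDerivAt_id x).sub_const y).norm_sq
  have h2 : HasFDerivAt (fun z : Euc N => c * ‖z - y‖ ^ 2)
      (c • (2 • (innerSL ℝ (x - y)).comp (ContinuousLinearMap.id ℝ (Euc N)))) x :=
    h1.const_mul c
  have h3 := h2.hasGradientAt
  convert h3 using 1
  apply (InnerProductSpace.toDual ℝ (Euc N)).injective
  rw [LinearIsometryEquiv.apply_symm_apply]
  ext z
  simp [InnerProductSpace.toDual_apply_apply, real_inner_smul_left, two_smul, inner_add_left]
  ring

lemma stmt7.bound_lem {N m : ℕ} {w : Fin m → Euc N → ℝ} (hw : IsTorusFun w) :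
    ∃ C : ℝ, 0 ≤ C ∧ ∀ i x, |w i x| ≤ C := by
  have hgc : Continuous (fun x : Euc N => fun i : Fin m => w i x) :=
    continuous_pi fun i => hw.1 i
  obtain ⟨C, hC⟩ := (isCompact_closedBall (0 : Euc N) N).exists_bound_of_continuousOn
    hgc.continuousOn
  refine ⟨max C 0, le_max_right _ _, fun i x => ?_⟩
  obtain ⟨k, hk⟩ := stmt7.reduce_lem x
  have hn := norm_le_pi_norm (fun j : Fin m => w j (x + intVec k)) i
  rw [Real.norm_eq_abs] at hn
  calc |w i x| = |w i (x + intVec k)| := by rw [hw.2 i x k]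
    _ ≤ ‖fun j : Fin m => w j (x + intVec k)‖ := hn
    _ ≤ C := hC _ (Metric.mem_closedBall.2 (by simpa [dist_eq_norm] using hk))
    _ ≤ max C 0 := le_max_left _ _

lemma stmt7.max_lem {N m : ℕ} (hm : 0 < m) (v u : Fin m → Euc N → ℝ)
    (hv : IsTorusFun v) (hu : IsTorusFun u) {ε Cu : ℝ} (hε : 0 < ε) (hCu0 : 0 ≤ Cu)
    (hCu : ∀ i x, |u i x| ≤ Cu) :
    ∃ (i : Fin m) (x y : Euc N), ‖x‖ ≤ N ∧
      ∀ (j : Fin m) (x' y' : Euc N),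
        v j x' - u j y' - ‖x' - y'‖ ^ 2 / (2 * ε) ≤ v i x - u i y - ‖x - y‖ ^ 2 / (2 * ε) := by
  classical
  set r : ℝ := max 1 (4 * ε * Cu) with hr
  have hr1 : (1:ℝ) ≤ r := le_max_left _ _
  have hr4 : 4 * ε * Cu ≤ r := le_max_right _ _
  have hr0 : (0:ℝ) ≤ r := le_trans zero_le_one hr1
  set G : Fin m → Euc N × Euc N → ℝ :=
    fun i q => v i q.1 - u i q.2 - ‖q.1 - q.2‖ ^ 2 / (2 * ε) with hG
  have hGc : ∀ i, Continuous (G i) := by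
    intro i
    exact (((hv.1 i).comp continuous_fst).sub ((hu.1 i).comp continuous_snd)).sub
      (((continuous_fst.sub continuous_snd).norm.pow 2).div_const _)
  set D : Set (Euc N × Euc N) :=
    Metric.closedBall (0 : Euc N) N ×ˢ Metric.closedBall (0 : Euc N) (N + r) with hD
  have hDc : IsCompact D := (isCompact_closedBall _ _).prod (isCompact_closedBall _ _)
  have hDne : D.Nonempty := by
    refine ⟨(0, 0), Set.mem_prod.2 ⟨?_, ?_⟩⟩ <;>
      simp [Metric.mem_closedBall] <;> positivity
  have hzex : ∀ i : Fin m, ∃ z ∈ D, ∀ q ∈ D, G i q ≤ G i z := by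
    intro i
    obtain ⟨zz, hzD, hz⟩ := hDc.exists_isMaxOn hDne (hGc i).continuousOn
    exact ⟨zz, hzD, fun q hq => hz hq⟩
  choose z hzD hzmax using hzex
  obtain ⟨i, _, hi⟩ := Finset.exists_max_image Finset.univ (fun i => G i (z i))
    ⟨⟨0, hm⟩, Finset.mem_univ _⟩
  refine ⟨i, (z i).1, (z i).2, ?_, ?_⟩
  · have := (Set.mem_prod.1 (hzD i)).1
    simpa [Metric.mem_closedBall, dist_eq_norm] using this
  · intro j x' y'
    obtain ⟨k, hk⟩ := stmt7.reduce_lem x'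
    set x'' : Euc N := x' + intVec k with hx''
    set y'' : Euc N := y' + intVec k with hy''
    have hsub : x'' - y'' = x' - y' := by rw [hx'', hy'']; abel
    have hval : G j (x'', y'') = G j (x', y') := by
      simp only [hG]
      rw [hsub, hv.2 j x' k, hu.2 j y' k]
    have hfin : G j (x'', y'') ≤ G i (z i) := by
      by_cases hcase : ‖x'' - y''‖ ≤ r
      · have hmem : (x'', y'') ∈ D := by
          refine Set.mem_prod.2 ⟨?_, ?_⟩
          · simpa [Metric.mem_closedBall, dist_eq_norm] using hk
          · have : ‖y''‖ ≤ ‖x''‖ + ‖x'' - y''‖ := by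
              have hyy : y'' = x'' - (x'' - y'') := by abel
              calc ‖y''‖ = ‖x'' - (x'' - y'')‖ := by rw [← hyy]
                _ ≤ ‖x''‖ + ‖x'' - y''‖ := norm_sub_le _ _
            simp only [Metric.mem_closedBall, dist_eq_norm, sub_zero]
            calc ‖y''‖ ≤ ‖x''‖ + ‖x'' - y''‖ := this
              _ ≤ N + r := add_le_add hk hcase
        exact le_trans (hzmax j _ hmem) (hi j (Finset.mem_univ _))
      · push_neg at hcase
        have hmem : (x'', x'') ∈ D := by
          refine Set.mem_prod.2 ⟨?_, ?_⟩
          · simpa [Metric.mem_closedBall, dist_eq_norm] using hk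
          · simp only [Metric.mem_closedBall, dist_eq_norm, sub_zero]
            exact hk.trans (by linarith)
        have hstep : G j (x'', y'') ≤ G j (x'', x'') := by
          simp only [hG, sub_self, norm_zero]
          have h0 : (0:ℝ) ^ 2 / (2 * ε) = 0 := by
            rw [zero_pow two_ne_zero, zero_div]
          rw [h0, sub_zero]
          have hb1 := (abs_le.1 (hCu j x'')).2
          have hb2 := (abs_le.1 (hCu j y'')).1
          have hn : r * r ≤ ‖x'' - y''‖ * ‖x'' - y''‖ :=
            mul_le_mul hcase.le hcase.le hr0 (norm_nonneg _)
          have ht : 2 * Cu ≤ ‖x'' - y''‖ ^ 2 / (2 * ε) := by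
            rw [le_div_iff₀ (by positivity)]
            nlinarith
          linarith
        exact hstep.trans (le_trans (hzmax j _ hmem) (hi j (Finset.mem_univ _)))
    calc G j (x', y') = G j (x'', y'') := hval.symm
      _ ≤ G i (z i) := hfin
set_option maxHeartbeats 2000000 in
/-- a subsolution with value `a` and a supersolution with value `b`
can coexist only if `b ≤ a`. -/
theorem stmt7 {N m : ℕ} (hN : 0 < N) (hm : 0 < m)
    (H : Fin m → Euc N → Euc N → ℝ) (hH : ∀ i, IsConvexHamiltonian (H i))
    (B : Euc N → Fin m → Fin m → ℝ) (hB : IsCouplingField B) (a b : ℝ)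
    (v u : Fin m → Euc N → ℝ) (hv : IsTorusFun v) (hu : IsTorusFun u)
    (hsub : IsSubSol H B (fun _ => a) v) (hsup : IsSuperSol H B (fun _ => b) u) :
    b ≤ a := by
  have key : ∀ η : ℝ, 0 < η → b ≤ a + η := by
    have hmne : Nonempty (Fin m) := ⟨⟨0, hm⟩⟩
    obtain ⟨Cu, hCu0, hCu⟩ := stmt7.bound_lem hu
    set K1 : Set (Euc N) := Metric.closedBall 0 (N + 1) with hK1
    have hK1c : IsCompact K1 := isCompact_closedBall _ _
    have hgc : Continuous (fun x : Euc N => fun i : Fin m => ∑ j, B x i j * v j x) :=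
      continuous_pi fun i => continuous_finset_sum _ fun j _ => (hB.1 i j).mul (hv.1 j)
    obtain ⟨C₁, hC₁⟩ := hK1c.exists_bound_of_continuousOn hgc.continuousOn
    have hC1 : ∀ i : Fin m, ∀ x ∈ K1, |∑ j, B x i j * v j x| ≤ C₁ := by
      intro i x hx
      have h := norm_le_pi_norm (fun i : Fin m => ∑ j, B x i j * v j x) i
      rw [Real.norm_eq_abs] at h
      exact h.trans (hC₁ x hx)
    choose α β hα hβ hbd using fun i => (hH i).2.2.2
    have hRex : ∀ i : Fin m, ∃ R, ∀ r ≥ R, a + C₁ + 1 ≤ α i r := fun i =>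
      Filter.eventually_atTop.1 ((hα i).eventually_ge_atTop (a + C₁ + 1))
    choose R hRs using hRex
    obtain ⟨imax, -, hRmax⟩ := Finset.exists_max_image Finset.univ R
      ⟨⟨0, hm⟩, Finset.mem_univ _⟩
    set R₀ := R imax with hR₀
    have hHc : Continuous (fun q : Euc N × Euc N => fun i : Fin m => H i q.1 q.2) :=
      continuous_pi fun i => (hH i).1
    have hBc : Continuous (fun x : Euc N => fun i j : Fin m => B x i j) :=
      continuous_pi fun i => continuous_pi fun j => hB.1 i j
    intro η hη
    -- uniform continuity of H on a compact set
    have hs : IsCompact (K1 ×ˢ Metric.closedBall (0 : Euc N) R₀) :=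
      hK1c.prod (isCompact_closedBall _ _)
    have hucH := hs.uniformContinuousOn_of_continuous hHc.continuousOn
    rw [Metric.uniformContinuousOn_iff] at hucH
    obtain ⟨δH, hδH0, hδH⟩ := hucH (η / 2) (by positivity)
    have hucB := hK1c.uniformContinuousOn_of_continuous hBc.continuousOn
    rw [Metric.uniformContinuousOn_iff] at hucB
    set ηB : ℝ := η / (2 * (m + 1) * (Cu + 1)) with hηB
    have hηB0 : 0 < ηB := by positivity
    obtain ⟨δB, hδB0, hδB⟩ := hucB ηB hηB0
    set d : ℝ := min (min δH δB) 1 with hd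
    have hd0 : 0 < d := lt_min (lt_min hδH0 hδB0) one_pos
    have hdH : d ≤ δH := le_trans (min_le_left _ _) (min_le_left _ _)
    have hdB : d ≤ δB := le_trans (min_le_left _ _) (min_le_right _ _)
    have hd1 : d ≤ 1 := min_le_right _ _
    set ε : ℝ := d ^ 2 / (8 * (Cu + 1)) with hεdef
    have hε0 : 0 < ε := by positivity
    obtain ⟨i, x, y, hxN, hmax⟩ := stmt7.max_lem hm v u hv hu hε0 hCu0 hCu
    -- basic consequences of maximality
    have hxy2 : ‖x - y‖ ^ 2 ≤ 4 * ε * Cu := by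
      have h := hmax i x x
      simp only [sub_self, norm_zero] at h
      rw [zero_pow two_ne_zero, zero_div] at h
      have h1 : ‖x - y‖ ^ 2 / (2 * ε) ≤ u i x - u i y := by linarith
      rw [div_le_iff₀ (by positivity)] at h1
      have h2 := (abs_le.1 (hCu i x)).2
      have h3 := (abs_le.1 (hCu i y)).1
      nlinarith [hε0.le]
    have hdxy : ‖x - y‖ < d := by
      have h2 : ‖x - y‖ ^ 2 < d ^ 2 := by
        refine lt_of_le_of_lt hxy2 ?_
        have hpos : (0:ℝ) < 8 * (Cu + 1) := by positivity
        rw [hεdef, show (4:ℝ) * (d ^ 2 / (8 * (Cu + 1))) * Cu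
          = d ^ 2 * (4 * Cu) / (8 * (Cu + 1)) from by ring, div_lt_iff₀ hpos]
        nlinarith [pow_pos hd0 2, hCu0]
      nlinarith [norm_nonneg (x - y), hd0]
    have hxK : x ∈ K1 := by
      rw [hK1, Metric.mem_closedBall, dist_eq_norm, sub_zero]
      linarith
    have hyK : y ∈ K1 := by
      rw [hK1, Metric.mem_closedBall, dist_eq_norm, sub_zero]
      have hyy : y = x - (x - y) := by abel
      calc ‖y‖ = ‖x - (x - y)‖ := by rw [← hyy]
        _ ≤ ‖x‖ + ‖x - y‖ := norm_sub_le _ _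
        _ ≤ N + 1 := by linarith
    -- the common gradient
    set c : ℝ := 1 / (2 * ε) with hc
    set p : Euc N := (2 * c) • (x - y) with hp
    have hcmul : ∀ t : ℝ, c * t = t / (2 * ε) := fun t => by rw [hc]; ring
    -- subsolution inequality
    have hsub1 : H i x p + ∑ j, B x i j * v j x ≤ a := by
      have hloc : IsLocalMax (fun z => v i z - c * ‖z - y‖ ^ 2) x := by
        apply Filter.Eventually.of_forall
        intro z
        have h := hmax i z y
        have e1 := hcmul (‖z - y‖ ^ 2)
        have e2 := hcmul (‖x - y‖ ^ 2)
        show v i z - c * ‖z - y‖ ^ 2 ≤ v i x - c * ‖x - y‖ ^ 2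
        linarith
      have h := hsub i x (fun z => c * ‖z - y‖ ^ 2) (stmt7.contdiff_lem c y) hloc
      rwa [(stmt7.grad_lem c y x).gradient] at h
    -- supersolution inequality
    have hsup1 : b ≤ H i y p + ∑ j, B y i j * u j y := by
      have hloc : IsLocalMin (fun z => u i z - (-c) * ‖z - x‖ ^ 2) y := by
        apply Filter.Eventually.of_forall
        intro z
        have h := hmax i x z
        have e1 := hcmul (‖x - z‖ ^ 2)
        have e2 := hcmul (‖x - y‖ ^ 2)
        have e3 : ‖x - z‖ = ‖z - x‖ := norm_sub_rev _ _
        have e4 : ‖x - y‖ = ‖y - x‖ := norm_sub_rev _ _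
        show u i y - (-c) * ‖y - x‖ ^ 2 ≤ u i z - (-c) * ‖z - x‖ ^ 2
        rw [← e3, ← e4]
        nlinarith [h]
      have h := hsup i y (fun z => (-c) * ‖z - x‖ ^ 2) (stmt7.contdiff_lem (-c) x) hloc
      have hg : gradient (fun z : Euc N => (-c) * ‖z - x‖ ^ 2) y = p := by
        rw [(stmt7.grad_lem (-c) x y).gradient, hp]
        module
      rwa [hg] at h
    -- index maximality
    have hcomp : ∀ j, v j x - u j y ≤ v i x - u i y := by
      intro j
      have h := hmax j x y
      linarith
    -- gradient bound
    have hpR : ‖p‖ ≤ R₀ := by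
      by_contra hcon
      push_neg at hcon
      have hRi : R i ≤ R₀ := hRmax i (Finset.mem_univ _)
      have h1 : a + C₁ + 1 ≤ α i ‖p‖ := hRs i ‖p‖ (le_of_lt (lt_of_le_of_lt hRi hcon))
      have h2 : α i ‖p‖ ≤ H i x p := (hbd i x p).1
      have h3 : -C₁ ≤ ∑ j, B x i j * v j x := (abs_le.1 (hC1 i x hxK)).1
      linarith
    -- coupling comparison
    have hcoup : ∑ j, B x i j * u j y ≤ ∑ j, B x i j * v j x := by
      have h1 : ∀ j, B x i j * (v i x - u i y) ≤ B x i j * (v j x - u j y) := by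
        intro j
        rcases eq_or_ne j i with rfl | hne
        · exact le_of_eq rfl
        · exact mul_le_mul_of_nonpos_left (hcomp j) ((hB.2.2 x).1.1 i j hne)
      have h2 : (∑ j, B x i j) * (v i x - u i y) ≤ ∑ j, B x i j * (v j x - u j y) := by
        rw [Finset.sum_mul]
        exact Finset.sum_le_sum fun j _ => h1 j
      rw [(hB.2.2 x).2.1 i, zero_mul] at h2
      have h3 : ∑ j, B x i j * (v j x - u j y)
          = ∑ j, B x i j * v j x - ∑ j, B x i j * u j y := by
        rw [← Finset.sum_sub_distrib]
        exact Finset.sum_congr rfl fun j _ => by ring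
      linarith [h3 ▸ h2]
    -- uniform continuity estimates
    have hpB : p ∈ Metric.closedBall (0 : Euc N) R₀ := by
      rw [Metric.mem_closedBall, dist_eq_norm, sub_zero]; exact hpR
    have hdyx : dist y x < d := by
      rw [dist_eq_norm, norm_sub_rev]; exact hdxy
    have hH2 := hδH (y, p) (Set.mem_prod.2 ⟨hyK, hpB⟩) (x, p) (Set.mem_prod.2 ⟨hxK, hpB⟩)
      (by rw [Prod.dist_eq]; simp only [dist_self]; rw [max_eq_left dist_nonneg]
          exact lt_of_lt_of_le hdyx hdH)
    have hHi : |H i y p - H i x p| < η / 2 := by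
      have h := dist_le_pi_dist (fun i : Fin m => H i y p) (fun i : Fin m => H i x p) i
      rw [Real.dist_eq] at h
      exact lt_of_le_of_lt h hH2
    have hB2 := hδB y hyK x hxK (lt_of_lt_of_le hdyx hdB)
    have hBij : ∀ j, |B y i j - B x i j| ≤ ηB := by
      intro j
      have h1 := dist_le_pi_dist (B y i) (B x i) j
      have h2 := dist_le_pi_dist (fun i j : Fin m => B y i j) (fun i j : Fin m => B x i j) i
      rw [Real.dist_eq] at h1
      exact le_of_lt (lt_of_le_of_lt (h1.trans h2) hB2)
    have hsumB : ∑ j, B y i j * u j y ≤ ∑ j, B x i j * u j y + η / 2 := by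
      have hkey : (m : ℝ) * (ηB * Cu) ≤ η / 2 := by
        have hmc : (m : ℝ) * Cu ≤ ((m : ℝ) + 1) * (Cu + 1) := by
          nlinarith [Nat.cast_nonneg (α := ℝ) m, hCu0]
        have e1 : (m : ℝ) * (ηB * Cu) = ((m : ℝ) * Cu) * ηB := by ring
        have e2 : ((m : ℝ) + 1) * (Cu + 1) * ηB = η / 2 := by
          rw [hηB]
          field_simp
        rw [e1, ← e2]
        exact mul_le_mul_of_nonneg_right hmc hηB0.le
      have h1 : ∑ j, (B y i j - B x i j) * u j y ≤ η / 2 := by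
        calc ∑ j, (B y i j - B x i j) * u j y ≤ ∑ _j : Fin m, ηB * Cu := by
              apply Finset.sum_le_sum
              intro j _
              calc (B y i j - B x i j) * u j y ≤ |(B y i j - B x i j) * u j y| :=
                    le_abs_self _
                _ = |B y i j - B x i j| * |u j y| := abs_mul _ _
                _ ≤ ηB * Cu := mul_le_mul (hBij j) (hCu j y) (abs_nonneg _) hηB0.le
          _ = (m : ℝ) * (ηB * Cu) := by
              rw [Finset.sum_const, Finset.card_univ, Fintype.card_fin, nsmul_eq_mul]
          _ ≤ η / 2 := hkey
      have h2 : ∑ j, B y i j * u j y - ∑ j, B x i j * u j y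
          = ∑ j, (B y i j - B x i j) * u j y := by
        rw [← Finset.sum_sub_distrib]
        exact Finset.sum_congr rfl fun j _ => by ring
      linarith [h2 ▸ h1]
    have habs := abs_lt.1 hHi
    linarith [habs.1, habs.2, hsub1, hsup1, hcoup, hsumB]
  by_contra hab
  push_neg at hab
  have hk := key ((b - a) / 2) (by linarith)
  linarith

end
end
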